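/- arXiv:2202.00325 — 8 statements merged into one kernel-verified Lean document; each statement's English description precedes it below -/
import Mathlib

section
/- Let G be a connected simple graph on N ≥ 2 vertices with degree vector d, and let x be an entrywise-positive eigenvector of the adjacency matrix of G with principal ratio γ = (max_v x_v)/(min_v x_v). Then c(d) ≤ γ² − 1. -/
open scoped Classical
open Matrix

/-- The square of the coefficient of variation of a vector: `(σ/μ)²` where
`μ` is the mean and `σ²` the (population) variance of the entries. -/
noncomputable def cv2 {ι : Type*} [Fintype ι] (x : ι → ℝ) : ℝ :=
  ((∑ i, (x i - (∑ j, x j) / (Fintype.card ι : ℝ)) ^ 2) / (Fintype.card ι : ℝ)) /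
    ((∑ j, x j) / (Fintype.card ι : ℝ)) ^ 2

/-- For a connected graph `G` on at least two vertices with an entrywise-positive
adjacency eigenvector `x` and principal ratio `γ = (max x) / (min x)`,
the degree vector `d` satisfies `c(d) ≤ γ² − 1`. -/
theorem stmt2 {V : Type*} [Fintype V] (G : SimpleGraph V) (hG : G.Connected)
    (hcard : 2 ≤ Fintype.card V)
    (x : V → ℝ) (hx : ∀ v, 0 < x v) (lam : ℝ)
    (heig : G.adjMatrix ℝ *ᵥ x = lam • x) :
    cv2 (fun v => (G.degree v : ℝ)) ≤ ((⨆ v, x v) / (⨅ v, x v)) ^ 2 - 1 := by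
  have hne : Nonempty V := Fintype.card_pos_iff.mp (by omega)
  obtain ⟨wm, hm⟩ := Finite.exists_min x
  obtain ⟨wM, hM⟩ := Finite.exists_max x
  set m := x wm with hmdef
  set M := x wM with hMdef
  have hm0 : 0 < m := hx wm
  have hM0 : 0 < M := hx wM
  have hinf : (⨅ v, x v) = m :=
    le_antisymm (ciInf_le (Finite.bddBelow_range x) wm) (le_ciInf hm)
  have hsup : (⨆ v, x v) = M :=
    le_antisymm (ciSup_le hM) (le_ciSup (Finite.bddAbove_range x) wM)
  rw [hinf, hsup]
  -- degrees are positive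
  have hdeg : ∀ v, 0 < G.degree v := by
    intro v
    obtain ⟨u, hu⟩ := Fintype.exists_ne_of_one_lt_card (by omega) v
    obtain ⟨p⟩ := hG.preconnected v u
    cases p with
    | nil => exact absurd rfl hu
    | cons h _ => exact (G.degree_pos_iff_exists_adj v).mpr ⟨_, h⟩
  set D : V → ℝ := fun v => (G.degree v : ℝ) with hDdef
  have hD0 : ∀ v, 0 < D v := fun v => by simp only [hDdef]; exact_mod_cast hdeg v
  -- eigen equation pointwise
  have heigv : ∀ v, lam * x v = ∑ u ∈ G.neighborFinset v, x u := by
    intro v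
    have h := congrFun heig v
    rw [SimpleGraph.adjMatrix_mulVec_apply] at h
    simpa using h.symm
  have hlow : ∀ v, D v * m ≤ lam * x v := by
    intro v
    rw [heigv v]
    have h := Finset.card_nsmul_le_sum (G.neighborFinset v) x m (fun i _ => hm i)
    have hc : (G.neighborFinset v).card = G.degree v := rfl
    rw [nsmul_eq_mul, hc] at h
    simpa [hDdef, mul_comm] using h
  have hupp : ∀ v, lam * x v ≤ D v * M := by
    intro v
    rw [heigv v]
    have h := Finset.sum_le_card_nsmul (G.neighborFinset v) x M (fun i _ => hM i)
    have hc : (G.neighborFinset v).card = G.degree v := rfl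
    rw [nsmul_eq_mul, hc] at h
    simpa [hDdef, mul_comm] using h
  have hlam : 0 < lam := by
    have h1 := hlow wm
    nlinarith [hx wm, hD0 wm, hm0]
  -- key pointwise comparison
  have key : ∀ v w, D v * m ^ 2 ≤ D w * M ^ 2 := by
    intro v w
    have hA : D v * m ≤ lam * M :=
      (hlow v).trans (mul_le_mul_of_nonneg_left (hM v) hlam.le)
    have hB : lam * m ≤ D w * M :=
      (mul_le_mul_of_nonneg_left (hm w) hlam.le).trans (hupp w)
    have := mul_le_mul hA hB (by positivity) (by positivity)
    have hcancel : lam * (D v * m ^ 2) ≤ lam * (D w * M ^ 2) := by nlinarith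
    exact le_of_mul_le_mul_left hcancel hlam
  set S := ∑ v, D v with hSdef
  set Nr := (Fintype.card V : ℝ) with hNrdef
  have hNr : (0 : ℝ) < Nr := by
    rw [hNrdef]; exact_mod_cast Fintype.card_pos
  have hS : 0 < S := Finset.sum_pos (fun v _ => hD0 v) Finset.univ_nonempty
  have hsum : ∀ v, Nr * D v * m ^ 2 ≤ S * M ^ 2 := by
    intro v
    have h : ∑ _w : V, D v * m ^ 2 ≤ ∑ w : V, D w * M ^ 2 :=
      Finset.sum_le_sum fun w _ => key v w
    rw [Finset.sum_const, nsmul_eq_mul, ← Finset.sum_mul] at h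
    calc Nr * D v * m ^ 2 = Nr * (D v * m ^ 2) := by ring
    _ ≤ S * M ^ 2 := h
  have key2 : Nr * (∑ v, D v ^ 2) * m ^ 2 ≤ S ^ 2 * M ^ 2 := by
    have h : ∑ v, Nr * D v * m ^ 2 * D v ≤ ∑ v, S * M ^ 2 * D v :=
      Finset.sum_le_sum fun v _ => mul_le_mul_of_nonneg_right (hsum v) (hD0 v).le
    have hL : ∑ v, Nr * D v * m ^ 2 * D v = Nr * (∑ v, D v ^ 2) * m ^ 2 := by
      rw [Finset.mul_sum, Finset.sum_mul]
      exact Finset.sum_congr rfl fun v _ => by ring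
    have hR : ∑ v, S * M ^ 2 * D v = S ^ 2 * M ^ 2 := by
      rw [← Finset.mul_sum, ← hSdef]; ring
    rw [hL, hR] at h
    exact h
  -- variance expansion and final algebra
  have expand : ∑ i, (D i - S / Nr) ^ 2 = (∑ i, D i ^ 2) - S ^ 2 / Nr := by
    have h : ∀ i : V, (D i - S / Nr) ^ 2
        = D i ^ 2 - 2 * (S / Nr) * D i + (S / Nr) ^ 2 := fun i => by ring
    simp_rw [h]
    rw [Finset.sum_add_distrib, Finset.sum_sub_distrib, ← Finset.mul_sum, ← hSdef,
      Finset.sum_const, nsmul_eq_mul, Finset.card_univ, ← hNrdef]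
    field_simp
    ring
  show ((∑ i, (D i - S / Nr) ^ 2) / Nr) / (S / Nr) ^ 2 ≤ (M / m) ^ 2 - 1
  rw [expand]
  have h1 : (((∑ i, D i ^ 2) - S ^ 2 / Nr) / Nr) / (S / Nr) ^ 2
      = (Nr * (∑ i, D i ^ 2) - S ^ 2) / S ^ 2 := by
    field_simp
  rw [h1, div_le_iff₀ (by positivity : (0 : ℝ) < S ^ 2)]
  have h2 : ((M / m) ^ 2 - 1) * S ^ 2 = (M ^ 2 * S ^ 2 - m ^ 2 * S ^ 2) / m ^ 2 := by
    field_simp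
  rw [h2, le_div_iff₀ (by positivity : (0 : ℝ) < m ^ 2)]
  nlinarith [key2]
end

section
/- Let G be a connected simple graph on N vertices and let x be an entrywise-positive eigenvector of the adjacency matrix of G with eigenvalue λ and with ‖x‖₂² = ∑_v x_v² = 1. Then c(x) ≤ N/(λ+1) − 1. -/
open scoped Classical
open Matrix

/-- For a connected graph `G` on `N` vertices with an entrywise-positive adjacency
eigenvector `x` with eigenvalue `λ` normalized so that `‖x‖₂² = 1`,
we have `c(x) ≤ N / (λ + 1) − 1`. -/
theorem stmt3 {V : Type*} [Fintype V] (G : SimpleGraph V) (hG : G.Connected)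
    (x : V → ℝ) (hx : ∀ v, 0 < x v) (lam : ℝ)
    (heig : G.adjMatrix ℝ *ᵥ x = lam • x)
    (hnorm : ∑ v, x v ^ 2 = 1) :
    cv2 x ≤ (Fintype.card V : ℝ) / (lam + 1) - 1 := by
  have hne : Nonempty V := hG.nonempty
  set S : ℝ := ∑ v, x v with hSdef
  have hS : 0 < S := Finset.sum_pos (fun v _ => hx v) Finset.univ_nonempty
  set N : ℝ := (Fintype.card V : ℝ) with hNdef
  have hN : 0 < N := by
    have : 0 < Fintype.card V := Fintype.card_pos
    rw [hNdef]; exact_mod_cast this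
  -- eigenvector equation pointwise
  have hA : ∀ u, ∑ v ∈ G.neighborFinset u, x v = lam * x u := by
    intro u
    have h := congrFun heig u
    rw [SimpleGraph.adjMatrix_mulVec_apply] at h
    simpa using h
  -- lam ≥ 0
  have hlam : 0 ≤ lam := by
    obtain ⟨u⟩ := hne
    have h1 : (0:ℝ) ≤ ∑ v ∈ G.neighborFinset u, x v :=
      Finset.sum_nonneg fun v _ => (hx v).le
    rw [hA u] at h1
    nlinarith [hx u]
  -- key pointwise bound
  have hkey : ∀ u, (lam + 1) * x u ≤ S := by
    intro u
    have hnot : u ∉ G.neighborFinset u := by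
      simp [SimpleGraph.mem_neighborFinset]
    have hle : ∑ v ∈ insert u (G.neighborFinset u), x v ≤ S :=
      Finset.sum_le_sum_of_subset_of_nonneg (Finset.subset_univ _)
        (fun v _ _ => (hx v).le)
    rw [Finset.sum_insert hnot, hA u] at hle
    linarith
  -- S^2 ≥ lam + 1
  have hS2 : lam + 1 ≤ S * S := by
    calc lam + 1 = ∑ v, (lam + 1) * x v ^ 2 := by
          rw [← Finset.mul_sum, hnorm, mul_one]
      _ ≤ ∑ v, S * x v := Finset.sum_le_sum fun v _ => by
          have := hkey v
          nlinarith [hx v]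
      _ = S * S := by rw [← Finset.mul_sum]
  -- variance computation
  have hvar : ∑ i, (x i - S / N) ^ 2 = 1 - S ^ 2 / N := by
    have hexp : ∀ i, (x i - S / N) ^ 2
        = x i ^ 2 - (2 * S / N) * x i + (S / N) ^ 2 := fun i => by ring
    rw [Finset.sum_congr rfl fun i _ => hexp i]
    rw [Finset.sum_add_distrib, Finset.sum_sub_distrib, hnorm, ← Finset.mul_sum,
      Finset.sum_const, Finset.card_univ, ← hSdef, nsmul_eq_mul, ← hNdef]
    field_simp
    ring
  have hcv : cv2 x = N / S ^ 2 - 1 := by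
    unfold cv2
    rw [← hNdef, ← hSdef, hvar]
    field_simp
  rw [hcv]
  have h1 : N / S ^ 2 ≤ N / (lam + 1) := by
    apply div_le_div_of_nonneg_left hN.le (by linarith)
    nlinarith
  linarith
end

section
/- For n ≥ 1 let K_{1,n,n} be the complete tripartite graph with parts of sizes 1, n, n, and for each n let x_n be an entrywise-positive eigenvector of the adjacency matrix of K_{1,n,n}. Then, as n → ∞, the principal ratio γ(K_{1,n,n}) = (max_v x_n(v))/(min_v x_n(v)) tends to 2, c(x_n) tends to 0, and c(d_n) tends to 0, where d_n is the degree vector of K_{1,n,n}. -/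
open scoped Classical
open Matrix Filter Topology

/-- The complete tripartite graph `K_{1,n,n}` with parts of sizes `1`, `n`, `n`. -/
def K1nn (n : ℕ) : SimpleGraph ((i : Fin 3) × Fin (![1, n, n] i)) :=
  SimpleGraph.completeMultipartiteGraph fun i : Fin 3 => Fin (![1, n, n] i)

abbrev V (n : ℕ) := (i : Fin 3) × Fin (![1, n, n] i)

lemma sigma_sum (n : ℕ) (f : V n → ℝ) :
    ∑ v : V n, f v = ∑ k : Fin 3, ∑ j : Fin (![1, n, n] k), f ⟨k, j⟩ := by
  rw [← Finset.univ_sigma_univ, Finset.sum_sigma]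

lemma fiber_sum (n : ℕ) (f : V n → ℝ) (i : Fin 3) :
    ∑ v : V n, (if i = v.1 then f v else 0) = ∑ j : Fin (![1, n, n] i), f ⟨i, j⟩ := by
  rw [sigma_sum]
  have : ∀ k : Fin 3, ∑ j : Fin (![1, n, n] k), (if i = (⟨k, j⟩ : V n).1 then f ⟨k, j⟩ else 0)
      = if i = k then ∑ j : Fin (![1, n, n] k), f ⟨k, j⟩ else 0 := by
    intro k; by_cases h : i = k <;> simp [h]
  simp_rw [this]
  simp

lemma nbr_sum (n : ℕ) (f : V n → ℝ) (v : V n) :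
    ∑ u ∈ (K1nn n).neighborFinset v, f u
      = (∑ k : Fin 3, ∑ j : Fin (![1, n, n] k), f ⟨k, j⟩) - ∑ j : Fin (![1, n, n] v.1), f ⟨v.1, j⟩ := by
  rw [SimpleGraph.neighborFinset_eq_filter, Finset.sum_filter]
  have h1 : ∀ u : V n, (if (K1nn n).Adj v u then f u else 0) = f u - (if v.1 = u.1 then f u else 0) := by
    intro u
    have : (K1nn n).Adj v u ↔ ¬ (v.1 = u.1) := Iff.rfl
    by_cases h : v.1 = u.1 <;> simp [this, h]
  simp_rw [h1, Finset.sum_sub_distrib]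
  rw [sigma_sum, fiber_sum]

lemma struct (n : ℕ) (hn : 1 ≤ n) (x : V n → ℝ) (lam : ℝ)
    (hx : ∀ v, 0 < x v) (heig : (K1nn n).adjMatrix ℝ *ᵥ x = lam • x) :
    ∃ a y : ℝ, 0 < a ∧ 0 < y ∧ 0 < lam ∧
      (∀ v : V n, x v = if v.1 = 0 then a else y) ∧
      lam * a = 2 * n * y ∧ lam * y = a + n * y := by
  have hn1 : 0 < (![1, n, n] (1 : Fin 3)) := by simpa using (show 0 < n by omega)
  have hn2 : 0 < (![1, n, n] (2 : Fin 3)) := by simpa using (show 0 < n by omega)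
  have hn0 : 0 < (![1, n, n] (0 : Fin 3)) := by simp
  set S : Fin 3 → ℝ := fun k => ∑ j : Fin (![1, n, n] k), x ⟨k, j⟩ with hS
  have eqv : ∀ (i : Fin 3) (j : Fin (![1, n, n] i)),
      lam * x ⟨i, j⟩ = (S 0 + S 1 + S 2) - S i := by
    intro i j
    have := congrFun heig ⟨i, j⟩
    rw [SimpleGraph.adjMatrix_mulVec_apply, nbr_sum, Fin.sum_univ_three] at this
    rw [Pi.smul_apply, smul_eq_mul] at this
    linarith [this]
  set j0 : Fin (![1, n, n] (0 : Fin 3)) := ⟨0, hn0⟩ with hj0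
  set a := x ⟨0, j0⟩ with ha
  set y1 := x ⟨1, ⟨0, hn1⟩⟩ with hy1
  set y2 := x ⟨2, ⟨0, hn2⟩⟩ with hy2
  have hS1pos : 0 < S 1 := Finset.sum_pos (fun j _ => hx _)
    ⟨⟨0, hn1⟩, Finset.mem_univ _⟩
  have hS2pos : 0 < S 2 := Finset.sum_pos (fun j _ => hx _)
    ⟨⟨0, hn2⟩, Finset.mem_univ _⟩
  have hlam : 0 < lam := by
    have h0 := eqv 0 j0
    nlinarith [hx (⟨0, j0⟩ : V n), hS1pos, hS2pos]
  have hc0 : ∀ j : Fin (![1, n, n] (0 : Fin 3)), x ⟨0, j⟩ = a := fun j =>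
    mul_left_cancel₀ (ne_of_gt hlam) (by rw [eqv 0 j, eqv 0 j0])
  have hc1 : ∀ j : Fin (![1, n, n] (1 : Fin 3)), x ⟨1, j⟩ = y1 := fun j =>
    mul_left_cancel₀ (ne_of_gt hlam) (by rw [eqv 1 j, eqv 1 ⟨0, hn1⟩])
  have hc2 : ∀ j : Fin (![1, n, n] (2 : Fin 3)), x ⟨2, j⟩ = y2 := fun j =>
    mul_left_cancel₀ (ne_of_gt hlam) (by rw [eqv 2 j, eqv 2 ⟨0, hn2⟩])
  have hS0 : S 0 = a := by
    rw [hS]; simp only [hc0]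
    rw [Finset.sum_const, Finset.card_univ, Fintype.card_fin]
    simp
  have hS1 : S 1 = n * y1 := by
    rw [hS]; simp only [hc1]
    rw [Finset.sum_const, Finset.card_univ, Fintype.card_fin]
    simp [nsmul_eq_mul]
  have hS2 : S 2 = n * y2 := by
    rw [hS]; simp only [hc2]
    rw [Finset.sum_const, Finset.card_univ, Fintype.card_fin]
    simp [nsmul_eq_mul]
  have E0 : lam * a = n * y1 + n * y2 := by
    have := eqv 0 j0; rw [hS0, hS1, hS2] at this; linarith [this]
  have E1 : lam * y1 = a + n * y2 := by
    have := eqv 1 ⟨0, hn1⟩; rw [hS0, hS1, hS2] at this; linarith [this]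
  have E2 : lam * y2 = a + n * y1 := by
    have := eqv 2 ⟨0, hn2⟩; rw [hS0, hS1, hS2] at this; linarith [this]
  have hy12 : y1 = y2 := by
    have h : (lam + n) * (y1 - y2) = 0 := by push_cast; linarith
    rcases mul_eq_zero.mp h with h' | h'
    · exact absurd h' (by positivity)
    · linarith
  refine ⟨a, y1, hx _, hx _, hlam, ?_, by rw [E0, hy12]; ring, by rw [hy12] at E1 ⊢; exact E1⟩
  rintro ⟨i, j⟩
  by_cases h0 : i = 0
  · subst h0; rw [if_pos rfl]; exact hc0 j
  · rw [if_neg h0]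
    by_cases h1 : i = 1
    · subst h1; exact hc1 j
    · have h2 : i = 2 := by
        have v0 : i.val ≠ 0 := fun h => h0 (Fin.ext h)
        have v1 : i.val ≠ 1 := fun h => h1 (Fin.ext h)
        have := i.isLt
        exact Fin.ext (by omega)
      subst h2; rw [hy12]; exact hc2 j

lemma card_V (n : ℕ) : (Fintype.card (V n) : ℝ) = 2 * n + 1 := by
  rw [Fintype.card_sigma, Fin.sum_univ_three, Fintype.card_fin, Fintype.card_fin, Fintype.card_fin]
  push_cast
  ring

lemma sum_struct (n : ℕ) (a y : ℝ) (z : V n → ℝ)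
    (hz : ∀ v : V n, z v = if v.1 = 0 then a else y) (g : ℝ → ℝ) :
    ∑ v : V n, g (z v) = g a + 2 * n * g y := by
  rw [sigma_sum, Fin.sum_univ_three]
  have e0 : ∀ j : Fin (![1, n, n] (0:Fin 3)), g (z ⟨0, j⟩) = g a := by
    intro j; rw [hz, if_pos rfl]
  have e1 : ∀ j : Fin (![1, n, n] (1:Fin 3)), g (z ⟨1, j⟩) = g y := by
    intro j
    have hne : ((⟨1, j⟩ : V n)).1 = 1 := rfl
    rw [hz, hne, if_neg (show (1:Fin 3) ≠ 0 by decide)]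
  have e2 : ∀ j : Fin (![1, n, n] (2:Fin 3)), g (z ⟨2, j⟩) = g y := by
    intro j
    have hne : ((⟨2, j⟩ : V n)).1 = 2 := rfl
    rw [hz, hne, if_neg (show (2:Fin 3) ≠ 0 by decide)]
  simp only [e0, e1, e2, Finset.sum_const, Finset.card_univ, Fintype.card_fin]
  simp [nsmul_eq_mul]
  ring

lemma sup_inf (n : ℕ) (hn : 1 ≤ n) (a y : ℝ) (hya : y ≤ a) (z : V n → ℝ)
    (hz : ∀ v : V n, z v = if v.1 = 0 then a else y) :
    (⨆ v, z v) = a ∧ (⨅ v, z v) = y := by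
  have hn1 : 0 < (![1, n, n] (1 : Fin 3)) := by simpa using (show 0 < n by omega)
  have hn0 : 0 < (![1, n, n] (0 : Fin 3)) := by simp
  have ha : z ⟨0, ⟨0, hn0⟩⟩ = a := by rw [hz, if_pos rfl]
  have hy : z ⟨1, ⟨0, hn1⟩⟩ = y := by
    have hne : ((⟨1, ⟨0, hn1⟩⟩ : V n)).1 = 1 := rfl
    rw [hz, hne, if_neg (show (1:Fin 3) ≠ 0 by decide)]
  haveI : Nonempty (V n) := ⟨⟨0, ⟨0, hn0⟩⟩⟩
  constructor
  · apply le_antisymm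
    · apply ciSup_le
      intro v; rw [hz]; split
      · exact le_rfl
      · exact hya
    · rw [← ha]; exact le_ciSup (Set.Finite.bddAbove (Set.finite_range z)) _
  · apply le_antisymm
    · rw [← hy]; exact ciInf_le (Set.Finite.bddBelow (Set.finite_range z)) _
    · apply le_ciInf
      intro v; rw [hz]; split
      · exact hya
      · exact le_rfl

lemma cv2_bound (n : ℕ) (hn : 1 ≤ n) (a y : ℝ) (hy : 0 < y) (hya : y ≤ a) (ha2 : a ≤ 2 * y)
    (z : V n → ℝ) (hz : ∀ v : V n, z v = if v.1 = 0 then a else y) :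
    0 ≤ cv2 z ∧ cv2 z ≤ 2 / (2 * (n:ℝ) + 1) := by
  have hN : (0:ℝ) < 2 * n + 1 := by positivity
  have ha : 0 < a := lt_of_lt_of_le hy hya
  have hsum : ∑ v : V n, z v = a + 2 * n * y := by
    simpa using sum_struct n a y z hz id
  set m : ℝ := (a + 2 * n * y) / (2 * n + 1) with hm
  have hmean : (∑ j : V n, z j) / (Fintype.card (V n) : ℝ) = m := by
    rw [hsum, card_V]
  have hmpos : 0 < m := by
    rw [hm]; apply div_pos (by nlinarith) hN
  have hsq : ∑ v : V n, (z v - m) ^ 2 = (a - m) ^ 2 + 2 * n * (y - m) ^ 2 :=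
    sum_struct n a y z hz (fun t => (t - m) ^ 2)
  have hcv : cv2 z = (((a - m) ^ 2 + 2 * n * (y - m) ^ 2) / (2 * n + 1)) / m ^ 2 := by
    rw [cv2, hmean, hsq, card_V]
  have hmN : m * (2 * n + 1) = a + 2 * n * y := by
    rw [hm]; field_simp
  have h1 : (2 * (n:ℝ) + 1) * (a - m) = 2 * n * (a - y) := by linear_combination -hmN
  have h2 : (2 * (n:ℝ) + 1) * (y - m) = y - a := by linear_combination -hmN
  have hn' : (1:ℝ) ≤ n := by exact_mod_cast hn
  have k1 : (a - y) ^ 2 ≤ y ^ 2 := by nlinarith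
  have goal2 : (2 * (n:ℝ) * (a - y)) ^ 2 + 2 * n * (y - a) ^ 2 ≤ 2 * (a + 2 * n * y) ^ 2 := by
    have m1 : 4 * (n:ℝ) ^ 2 * (a - y) ^ 2 ≤ 4 * n ^ 2 * y ^ 2 :=
      mul_le_mul_of_nonneg_left k1 (by positivity)
    have m2 : 2 * (n:ℝ) * (y - a) ^ 2 ≤ 2 * n * y ^ 2 := by
      apply mul_le_mul_of_nonneg_left _ (by positivity)
      nlinarith
    nlinarith [m1, m2, hy, hya, hn', mul_pos hy ha, sq_nonneg a]
  have hA : (2 * (n:ℝ) + 1) ^ 2 * ((a - m) ^ 2 + 2 * n * (y - m) ^ 2)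
      = (2 * n * (a - y)) ^ 2 + 2 * n * (y - a) ^ 2 := by
    have q1 : ((2 * (n:ℝ) + 1) * (a - m)) ^ 2 = (2 * n * (a - y)) ^ 2 := by rw [h1]
    have q2 : ((2 * (n:ℝ) + 1) * (y - m)) ^ 2 = (y - a) ^ 2 := by rw [h2]
    linear_combination q1 + 2 * (n:ℝ) * q2
  have hC : (2 * (n:ℝ) + 1) ^ 2 * (2 * m ^ 2) = 2 * (a + 2 * n * y) ^ 2 := by
    have : ((2 * (n:ℝ) + 1) * m) ^ 2 = (a + 2 * n * y) ^ 2 := by rw [mul_comm, hmN]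
    linear_combination 2 * this
  have key : (a - m) ^ 2 + 2 * (n:ℝ) * (y - m) ^ 2 ≤ 2 * m ^ 2 := by
    have h : (2 * (n:ℝ) + 1) ^ 2 * ((a - m) ^ 2 + 2 * n * (y - m) ^ 2)
        ≤ (2 * (n:ℝ) + 1) ^ 2 * (2 * m ^ 2) := by
      rw [hA, hC]; exact goal2
    exact le_of_mul_le_mul_left h (by positivity)
  constructor
  · rw [hcv]; positivity
  · rw [hcv]
    calc ((a - m) ^ 2 + 2 * (n:ℝ) * (y - m) ^ 2) / (2 * (n:ℝ) + 1) / m ^ 2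
        ≤ (2 * m ^ 2) / (2 * (n:ℝ) + 1) / m ^ 2 := by gcongr
      _ = 2 / (2 * (n:ℝ) + 1) := by
          field_simp

lemma deg_eq (n : ℕ) (v : V n) :
    ((K1nn n).degree v : ℝ) = if v.1 = 0 then 2 * (n:ℝ) else (n:ℝ) + 1 := by
  have h0 : ((K1nn n).degree v : ℝ) = ∑ u ∈ (K1nn n).neighborFinset v, (1:ℝ) := by
    rw [SimpleGraph.degree]; simp
  rw [h0, nbr_sum, Fin.sum_univ_three]
  simp only [Finset.sum_const, Finset.card_univ, Fintype.card_fin, nsmul_eq_mul, mul_one]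
  by_cases h : v.1 = 0
  · rw [h, if_pos rfl]
    norm_num
    rw [show (![1, n, n] 2 : ℕ) = n from rfl]
    ring
  · rw [if_neg h]
    have h2 : (![1, n, n] v.1 : ℝ) = n := by
      rcases v with ⟨i, j⟩
      by_cases h1 : i = 1
      · subst h1; simp
      · have : i = 2 := by
          have v0 : i.val ≠ 0 := fun hh => h (Fin.ext hh)
          have v1 : i.val ≠ 1 := fun hh => h1 (Fin.ext hh)
          have := i.isLt
          exact Fin.ext (by omega)
        subst this; simp
    rw [h2]
    norm_num
    rw [show (![1, n, n] 2 : ℕ) = n from rfl]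
    ring

lemma ratio_bounds (n : ℕ) (hn : 1 ≤ n) (a y lam : ℝ) (ha : 0 < a) (hy : 0 < y)
    (hl : 0 < lam) (e0 : lam * a = 2 * n * y) (e1 : lam * y = a + n * y) :
    2 - 4 / (n:ℝ) ≤ a / y ∧ a / y ≤ 2 := by
  have npos : (0:ℝ) < n := by exact_mod_cast hn
  have key : a ^ 2 + n * (a * y) = 2 * n * y ^ 2 := by
    linear_combination y * e0 - a * e1
  have ha2 : a ≤ 2 * y := by nlinarith [key, mul_pos npos hy, sq_nonneg a]
  have hq : (n:ℝ) * (2 * y - a) ≤ 4 * y := by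
    have hyy : (n:ℝ) * y * (2 * y - a) = a ^ 2 := by linear_combination -key
    have haa : a ^ 2 ≤ 4 * y ^ 2 := by nlinarith
    have : (n:ℝ) * y * (2 * y - a) ≤ 4 * y * y := by nlinarith
    exact le_of_mul_le_mul_right (by nlinarith) hy
  have h1 : (2 - 4 / (n:ℝ)) * y ≤ a := by
    have hmul : (n:ℝ) * ((2 - 4 / (n:ℝ)) * y) = 2 * n * y - 4 * y := by
      field_simp
    have h2 : (n:ℝ) * ((2 - 4 / n) * y) ≤ n * a := by rw [hmul]; linarith
    exact le_of_mul_le_mul_left h2 npos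
  exact ⟨(le_div_iff₀ hy).2 h1, (div_le_iff₀ hy).2 (by linarith)⟩

/-- For `n ≥ 1` let `xₙ` be an entrywise-positive adjacency eigenvector of
`K_{1,n,n}` and `dₙ` its degree vector.  As `n → ∞`, the principal ratio
`γ(K_{1,n,n}) → 2`, `c(xₙ) → 0` and `c(dₙ) → 0`. -/
theorem stmt6 (x : (n : ℕ) → ((i : Fin 3) × Fin (![1, n, n] i)) → ℝ) (lam : ℕ → ℝ)
    (hx : ∀ n, 1 ≤ n → ∀ v, 0 < x n v)
    (heig : ∀ n, 1 ≤ n → (K1nn n).adjMatrix ℝ *ᵥ x n = lam n • x n) :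
    Tendsto (fun n => (⨆ v, x n v) / (⨅ v, x n v)) atTop (𝓝 2) ∧
    Tendsto (fun n => cv2 (x n)) atTop (𝓝 0) ∧
    Tendsto (fun n => cv2 (fun v => ((K1nn n).degree v : ℝ))) atTop (𝓝 0) := by
  have main : ∀ n : ℕ, 4 ≤ n → ∃ a y : ℝ, 0 < y ∧ y ≤ a ∧ a ≤ 2 * y ∧
      (∀ v, x n v = if v.1 = 0 then a else y) ∧ 2 - 4 / (n:ℝ) ≤ a / y ∧ a / y ≤ 2 := by
    intro n hn4
    have hn : 1 ≤ n := by omega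
    obtain ⟨a, y, ha, hy, hlam, hform, e0, e1⟩ :=
      struct n hn (x n) (lam n) (hx n hn) (heig n hn)
    obtain ⟨hlow, hhigh⟩ := ratio_bounds n hn a y (lam n) ha hy hlam e0 e1
    have hn' : (4:ℝ) ≤ n := by exact_mod_cast hn4
    have h4n : 4 / (n:ℝ) ≤ 1 := by
      rw [div_le_one (by positivity)]; exact hn'
    have hr1 : (1:ℝ) ≤ a / y := by linarith
    have hya : y ≤ a := by
      have := (le_div_iff₀ hy).1 hr1
      linarith
    have ha2 : a ≤ 2 * y := (div_le_iff₀ hy).1 hhigh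
    exact ⟨a, y, hy, hya, ha2, hform, hlow, hhigh⟩
  have hlow_t : Tendsto (fun n : ℕ => 2 - 4 / (n:ℝ)) atTop (𝓝 2) := by
    have h4 : Tendsto (fun n : ℕ => 4 / (n:ℝ)) atTop (𝓝 0) :=
      tendsto_const_div_atTop_nhds_zero_nat 4
    simpa using tendsto_const_nhds.sub h4
  have hNt : Tendsto (fun n : ℕ => 2 / (2 * (n:ℝ) + 1)) atTop (𝓝 0) := by
    apply Tendsto.div_atTop (tendsto_const_nhds)
    apply tendsto_atTop_add_const_right
    exact Tendsto.const_mul_atTop two_pos tendsto_natCast_atTop_atTop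
  refine ⟨?_, ?_, ?_⟩
  · apply tendsto_of_tendsto_of_tendsto_of_le_of_le' hlow_t tendsto_const_nhds
    · filter_upwards [eventually_ge_atTop 4] with n hn4
      obtain ⟨a, y, hy, hya, ha2, hform, hlo, hhi⟩ := main n hn4
      obtain ⟨hs, hi⟩ := sup_inf n (by omega) a y hya (x n) hform
      rw [hs, hi]; exact hlo
    · filter_upwards [eventually_ge_atTop 4] with n hn4
      obtain ⟨a, y, hy, hya, ha2, hform, hlo, hhi⟩ := main n hn4
      obtain ⟨hs, hi⟩ := sup_inf n (by omega) a y hya (x n) hform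
      rw [hs, hi]; exact hhi
  · apply tendsto_of_tendsto_of_tendsto_of_le_of_le' tendsto_const_nhds hNt
    · filter_upwards [eventually_ge_atTop 4] with n hn4
      obtain ⟨a, y, hy, hya, ha2, hform, hlo, hhi⟩ := main n hn4
      exact (cv2_bound n (by omega) a y hy hya ha2 (x n) hform).1
    · filter_upwards [eventually_ge_atTop 4] with n hn4
      obtain ⟨a, y, hy, hya, ha2, hform, hlo, hhi⟩ := main n hn4
      exact (cv2_bound n (by omega) a y hy hya ha2 (x n) hform).2
  · apply tendsto_of_tendsto_of_tendsto_of_le_of_le' tendsto_const_nhds hNt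
    · filter_upwards [eventually_ge_atTop 1] with n hn1
      have hn' : (1:ℝ) ≤ n := by exact_mod_cast hn1
      exact (cv2_bound n hn1 (2 * (n:ℝ)) ((n:ℝ) + 1) (by positivity)
        (by linarith) (by linarith) _ (deg_eq n)).1
    · filter_upwards [eventually_ge_atTop 1] with n hn1
      have hn' : (1:ℝ) ≤ n := by exact_mod_cast hn1
      exact (cv2_bound n hn1 (2 * (n:ℝ)) ((n:ℝ) + 1) (by positivity)
        (by linarith) (by linarith) _ (deg_eq n)).2
end

section
/- Fix an integer k ≥ 1. For each n ≥ 2 let x_n be an entrywise-positive eigenvector of the adjacency matrix of the complete split graph S(n, kn). Then the principal ratio γ(S(n,kn)) = (max_v x_n(v))/(min_v x_n(v)) tends to (√(4k+1) + 1)/2 as n → ∞. -/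
open scoped Classical
open Matrix Filter Topology

/-- The complete split graph `S(n,m) = K_{n+m} − K_m`: a clique of `n` vertices
(the left summand) completely joined to an independent set of `m` vertices
(the right summand). -/
def completeSplitGraph (n m : ℕ) : SimpleGraph (Fin n ⊕ Fin m) where
  Adj u v := u ≠ v ∧ (u.isLeft ∨ v.isLeft)
  symm := by
    constructor
    rintro u v ⟨h1, h2⟩
    exact ⟨h1.symm, h2.symm⟩
  loopless := by
    constructor
    rintro u ⟨h, -⟩
    exact h rfl

set_option maxHeartbeats 1200000 in
private lemma csg_ratio_aux (k n : ℕ) (hk : 1 ≤ k) (hn : 2 ≤ n) (hkn : 2 ≤ k * n)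
    (x : (Fin n ⊕ Fin (k * n)) → ℝ) (lam : ℝ)
    (hx : ∀ v, 0 < x v)
    (hR : ∀ j : Fin (k*n), (∑ i : Fin n, x (Sum.inl i)) = lam * x (Sum.inr j))
    (hL : ∀ i : Fin n, (∑ u, x u) - x (Sum.inl i) = lam * x (Sum.inl i)) :
    (⨆ v, x v) / (⨅ v, x v)
      = ((1 - 1/(n:ℝ)) + Real.sqrt ((1 - 1/(n:ℝ))^2 + 4*k)) / 2 := by
  have i0 : Fin n := ⟨0, by omega⟩
  have j0 : Fin (k * n) := ⟨0, by omega⟩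
  haveI : Nonempty (Fin n) := ⟨i0⟩
  haveI : Nonempty (Fin (k*n)) := ⟨j0⟩
  haveI : Nonempty (Fin n ⊕ Fin (k*n)) := ⟨Sum.inl i0⟩
  obtain ⟨a, ha⟩ : ∃ a : ℝ, x (Sum.inl i0) = a := ⟨_, rfl⟩
  obtain ⟨b, hb⟩ : ∃ b : ℝ, x (Sum.inr j0) = b := ⟨_, rfl⟩
  have hapos : 0 < a := ha ▸ hx _
  have hbpos : 0 < b := hb ▸ hx _
  have hLsum : 0 < ∑ i : Fin n, x (Sum.inl i) :=
    Finset.sum_pos (fun i _ => hx _) Finset.univ_nonempty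
  have hlam : 0 < lam := by
    have h := hR j0
    nlinarith
  -- all left entries equal a
  have hleft : ∀ i, x (Sum.inl i) = a := by
    intro i
    have h1 := hL i
    have h2 := hL i0
    rw [ha] at h2
    have : (lam + 1) * x (Sum.inl i) = (lam + 1) * a := by nlinarith
    have hne : lam + 1 ≠ 0 := by positivity
    exact mul_left_cancel₀ hne this
  have hright : ∀ j, x (Sum.inr j) = b := by
    intro j
    have h1 := hR j
    have h2 := hR j0
    rw [hb] at h2
    have : lam * x (Sum.inr j) = lam * b := by linarith
    exact mul_left_cancel₀ (ne_of_gt hlam) this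
  have hLval : (∑ i : Fin n, x (Sum.inl i)) = n * a := by
    rw [Finset.sum_congr rfl (fun i _ => hleft i)]
    simp [mul_comm]
  have heq2 : (n : ℝ) * a = lam * b := by rw [← hLval, ← hb]; exact hR j0
  have hTot : (∑ u, x u) = n * a + (k*n : ℕ) * b := by
    rw [Fintype.sum_sum_type, hLval, Finset.sum_congr rfl (fun j _ => hright j)]
    simp [mul_comm]
  have heq1 : (n:ℝ) * a + (k*n:ℕ) * b - a = lam * a := by rw [← hTot, ← ha]; exact hL i0
  have hcast : ((k*n : ℕ) : ℝ) = (k:ℝ) * n := by push_cast; ring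
  rw [hcast] at heq1
  have hn1 : (1:ℝ) ≤ k := by exact_mod_cast hk
  have hn2 : (2:ℝ) ≤ n := by exact_mod_cast hn
  -- quadratic: lam^2 = (n-1) lam + k n^2
  have hquad : lam^2 = ((n:ℝ) - 1) * lam + k * n^2 := by
    have h1 : lam * (lam * a) = lam * ((n:ℝ)*a + k*n*b - a) := by rw [heq1]
    have h2 : lam * b = n * a := heq2.symm
    have : lam^2 * a = (((n:ℝ)-1)*lam + k*n^2) * a := by nlinarith
    have := mul_right_cancel₀ (ne_of_gt hapos) this
    linarith
  have hlamgt : (n:ℝ) < lam := by nlinarith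
  have hab : b < a := by nlinarith
  have hsup : (⨆ v, x v) = a := by
    apply le_antisymm
    · apply ciSup_le
      intro v
      cases v with
      | inl i => rw [hleft i]
      | inr j => rw [hright j]; exact le_of_lt hab
    · have := le_ciSup (Set.Finite.bddAbove (Set.finite_range (x))) (Sum.inl i0)
      rwa [ha] at this
  have hinf : (⨅ v, x v) = b := by
    apply le_antisymm
    · have := ciInf_le (Set.Finite.bddBelow (Set.finite_range (x))) (Sum.inr j0)
      rwa [hb] at this
    · apply le_ciInf
      intro v
      cases v with
      | inl i => rw [hleft i]; exact le_of_lt hab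
      | inr j => rw [hright j]
  rw [hsup, hinf]
  -- a / b = lam / n
  have hnpos : (0:ℝ) < n := by linarith
  have hratio : a / b = lam / n := by
    rw [div_eq_div_iff (ne_of_gt hbpos) (ne_of_gt hnpos)]
    linarith [heq2]
  rw [hratio]
  obtain ⟨c, hc⟩ : ∃ c : ℝ, c = 1 - 1/(n:ℝ) := ⟨_, rfl⟩
  rw [← hc]
  have hsqrt : Real.sqrt (c^2 + 4*k) = 2 * (lam/n) - c := by
    have hcn : c * n = (n:ℝ) - 1 := by
      rw [hc]; field_simp
    have hr : (lam/n)^2 = c * (lam/n) + k := by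
      have e1 : (lam/n)^2 * n^2 = (c * (lam/n) + k) * n^2 := by
        have hln : (lam/n) * n = lam := by field_simp
        have h1 : (lam/n)^2 * n^2 = lam^2 := by
          have : (lam/(n:ℝ))^2 * n^2 = ((lam/n) * n)^2 := by ring
          rw [this, hln]
        have h2 : (c * (lam/n) + k) * (n:ℝ)^2 = c * n * lam + k * n^2 := by
          rw [show (c * (lam/n) + (k:ℝ)) * (n:ℝ)^2 = c * ((lam/n) * n) * n + k * n^2 from by ring, hln]
          ring
        rw [h1, h2, hcn]
        linarith [hquad]
      have hn2 : (n:ℝ)^2 ≠ 0 := by positivity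
      exact mul_right_cancel₀ hn2 e1
    have h2 : c^2 + 4*k = (2*(lam/n) - c)^2 := by nlinarith
    have hg1 : 1 < lam / n := (one_lt_div hnpos).mpr hlamgt
    have hg2 : c ≤ 1 := by
      rw [hc]
      have : 0 < 1/(n:ℝ) := by positivity
      linarith
    have hpos : (0:ℝ) ≤ 2*(lam/n) - c := by linarith
    rw [h2]
    exact Real.sqrt_sq hpos
  rw [hsqrt]
  ring

set_option maxHeartbeats 1200000 in
/-- Fix `k ≥ 1`.  If `xₙ` is an entrywise-positive adjacency eigenvector of the
complete split graph `S(n, kn)`, then the principal ratio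
`γ(S(n,kn)) = (max xₙ)/(min xₙ)` tends to `(√(4k+1) + 1)/2` as `n → ∞`. -/
theorem stmt8 (k : ℕ) (hk : 1 ≤ k)
    (x : (n : ℕ) → (Fin n ⊕ Fin (k * n)) → ℝ) (lam : ℕ → ℝ)
    (hx : ∀ n, 2 ≤ n → ∀ v, 0 < x n v)
    (heig : ∀ n, 2 ≤ n →
      (completeSplitGraph n (k * n)).adjMatrix ℝ *ᵥ x n = lam n • x n) :
    Tendsto (fun n => (⨆ v, x n v) / (⨅ v, x n v)) atTop
      (𝓝 ((Real.sqrt (4 * k + 1) + 1) / 2)) := by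
  have key : ∀ n, 2 ≤ n → (⨆ v, x n v) / (⨅ v, x n v)
      = ((1 - 1/(n:ℝ)) + Real.sqrt ((1 - 1/(n:ℝ))^2 + 4*k)) / 2 := by
    intro n hn
    have hkn : 2 ≤ k * n := le_trans hn (Nat.le_mul_of_pos_left n hk)
    have hv : ∀ v, ∑ u, (if (completeSplitGraph n (k*n)).Adj v u then (1:ℝ) else 0) * x n u
        = lam n * x n v := by
      intro v
      have h := congrFun (heig n hn) v
      simpa [Matrix.mulVec, dotProduct, SimpleGraph.adjMatrix_apply] using h
    have hR : ∀ j : Fin (k*n), (∑ i : Fin n, x n (Sum.inl i)) = lam n * x n (Sum.inr j) := by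
      intro j
      have h := hv (Sum.inr j)
      rw [Fintype.sum_sum_type] at h
      simpa [completeSplitGraph] using h
    have hL : ∀ i : Fin n, (∑ u, x n u) - x n (Sum.inl i) = lam n * x n (Sum.inl i) := by
      intro i
      have h := hv (Sum.inl i)
      have hsplit : ∀ u, (if (completeSplitGraph n (k*n)).Adj (Sum.inl i) u then (1:ℝ) else 0) * x n u
          = x n u - (if u = Sum.inl i then x n u else 0) := by
        intro u
        by_cases hu : u = Sum.inl i
        · simp [hu, completeSplitGraph]
        · have : Sum.inl i ≠ u := fun h => hu h.symm
          simp [hu, completeSplitGraph, this]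
      rw [Finset.sum_congr rfl (fun u _ => hsplit u)] at h
      rw [Finset.sum_sub_distrib, Finset.sum_ite_eq' Finset.univ (Sum.inl i) (x n)] at h
      simpa using h
    exact csg_ratio_aux k n hk hn hkn (x n) (lam n) (hx n hn) hR hL
  have hc : Tendsto (fun n : ℕ => 1 - 1/(n:ℝ)) atTop (𝓝 1) := by
    simpa using (tendsto_const_nhds : Tendsto (fun _ : ℕ => (1:ℝ)) atTop (𝓝 1)).sub tendsto_one_div_atTop_nhds_zero_nat
  have hs : Tendsto (fun n : ℕ => Real.sqrt ((1 - 1/(n:ℝ))^2 + 4*(k:ℝ))) atTop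
      (𝓝 (Real.sqrt ((1:ℝ)^2 + 4*k))) :=
    ((hc.pow 2).add tendsto_const_nhds).sqrt
  have hall : Tendsto (fun n : ℕ => ((1 - 1/(n:ℝ)) + Real.sqrt ((1 - 1/(n:ℝ))^2 + 4*k)) / 2)
      atTop (𝓝 ((1 + Real.sqrt ((1:ℝ)^2 + 4*k)) / 2)) := (hc.add hs).div_const 2
  have hval : ((Real.sqrt (4*(k:ℝ)+1) + 1)/2 : ℝ) = (1 + Real.sqrt ((1:ℝ)^2 + 4*(k:ℝ)))/2 := by
    rw [show ((1:ℝ)^2 + 4*(k:ℝ)) = 4*(k:ℝ)+1 by ring]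
    ring
  rw [hval]
  refine Tendsto.congr' ?_ hall
  filter_upwards [eventually_ge_atTop 2] with n hn
  exact (key n hn).symm
end

section
/- For each n ≥ 2 let x_n be an entrywise-positive eigenvector of the adjacency matrix of the complete split graph S(n, n). Then the principal ratio γ(S(n,n)) = (max_v x_n(v))/(min_v x_n(v)) tends to the golden ratio φ = (1 + √5)/2 as n → ∞. -/
open scoped Classical
open Matrix Filter Topology

lemma csg_ratio (n : ℕ) (hn : 2 ≤ n) (x : Fin n ⊕ Fin n → ℝ) (lam : ℝ)
    (hx : ∀ v, 0 < x v)
    (heig : (completeSplitGraph n n).adjMatrix ℝ *ᵥ x = lam • x) :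
    (⨆ v, x v) / (⨅ v, x v)
      = (((n : ℝ) - 1) / n + Real.sqrt ((((n : ℝ) - 1) / n) ^ 2 + 4)) / 2 := by
  have hn1 : 0 < n := by omega
  have i0 : Fin n := ⟨0, hn1⟩
  haveI : Nonempty (Fin n ⊕ Fin n) := ⟨Sum.inl i0⟩
  set S : ℝ := ∑ j, x (Sum.inl j) with hSdef
  set T : ℝ := ∑ j, x (Sum.inr j) with hTdef
  -- pointwise eigen equations
  have h1 : ∀ i, lam * x (Sum.inl i) = (S - x (Sum.inl i)) + T := by
    intro i
    have h := congrFun heig (Sum.inl i)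
    simp only [mulVec, dotProduct, SimpleGraph.adjMatrix_apply, Pi.smul_apply,
      smul_eq_mul, Fintype.sum_sum_type] at h
    have e1 : ∀ j, (if (completeSplitGraph n n).Adj (Sum.inl i) (Sum.inl j) then (1:ℝ) else 0)
        * x (Sum.inl j) = x (Sum.inl j) - (if j = i then x (Sum.inl j) else 0) := by
      intro j
      by_cases hj : j = i
      · subst hj
        have : ¬ (completeSplitGraph n n).Adj (Sum.inl j) (Sum.inl j) :=
          (completeSplitGraph n n).loopless.irrefl _
        simp [this]
      · have : (completeSplitGraph n n).Adj (Sum.inl i) (Sum.inl j) :=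
          ⟨by simpa using Ne.symm hj, Or.inl rfl⟩
        simp [this, hj]
    have e2 : ∀ w : Fin n, (if (completeSplitGraph n n).Adj (Sum.inl i) (Sum.inr w)
        then (1:ℝ) else 0) * x (Sum.inr w) = x (Sum.inr w) := by
      intro w
      have : (completeSplitGraph n n).Adj (Sum.inl i) (Sum.inr w) :=
        ⟨by simp, Or.inl rfl⟩
      simp [this]
    simp only [e1, e2, Finset.sum_sub_distrib, Finset.sum_ite_eq' Finset.univ i,
      Finset.mem_univ, if_true] at h
    linarith [h]
  have h2 : ∀ w, lam * x (Sum.inr w) = S := by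
    intro w
    have h := congrFun heig (Sum.inr w)
    simp only [mulVec, dotProduct, SimpleGraph.adjMatrix_apply, Pi.smul_apply,
      smul_eq_mul, Fintype.sum_sum_type] at h
    have e1 : ∀ j, (if (completeSplitGraph n n).Adj (Sum.inr w) (Sum.inl j) then (1:ℝ) else 0)
        * x (Sum.inl j) = x (Sum.inl j) := by
      intro j
      have : (completeSplitGraph n n).Adj (Sum.inr w) (Sum.inl j) := ⟨by simp, Or.inr rfl⟩
      simp [this]
    have e2 : ∀ w' : Fin n, (if (completeSplitGraph n n).Adj (Sum.inr w) (Sum.inr w')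
        then (1:ℝ) else 0) * x (Sum.inr w') = 0 := by
      intro w'
      have : ¬ (completeSplitGraph n n).Adj (Sum.inr w) (Sum.inr w') := by
        rintro ⟨-, h | h⟩ <;> simp at h
      simp [this]
    simp only [e1, e2, Finset.sum_const_zero, add_zero] at h
    linarith [h]
  have hS : 0 < S := Finset.sum_pos (fun j _ => hx _) ⟨i0, Finset.mem_univ _⟩
  have hT : 0 < T := Finset.sum_pos (fun j _ => hx _) ⟨i0, Finset.mem_univ _⟩
  have hlam : 0 < lam := by
    have h := h2 i0
    nlinarith [hx (Sum.inr i0)]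
  set a : ℝ := x (Sum.inl i0) with hadef
  set b : ℝ := x (Sum.inr i0) with hbdef
  have ha : 0 < a := hx _
  have hb : 0 < b := hx _
  have key : ∀ i, (lam + 1) * x (Sum.inl i) = S + T := by
    intro i; have := h1 i; ring_nf; ring_nf at this; linarith
  have hxa : ∀ i, x (Sum.inl i) = a := by
    intro i
    have hp : (0:ℝ) < lam + 1 := by linarith
    exact mul_left_cancel₀ (ne_of_gt hp) ((key i).trans (key i0).symm)
  have hxb : ∀ w, x (Sum.inr w) = b := by
    intro w
    exact mul_left_cancel₀ (ne_of_gt hlam) ((h2 w).trans (h2 i0).symm)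
  have hS' : S = n * a := by
    rw [hSdef]
    simp [hxa, Finset.sum_const, Finset.card_univ, nsmul_eq_mul]
  have hT' : T = n * b := by
    rw [hTdef]
    simp [hxb, Finset.sum_const, Finset.card_univ, nsmul_eq_mul]
  have eqa : lam * a = (n * a - a) + n * b := by
    have := h1 i0; rw [hS', hT'] at this; exact this
  have eqb : lam * b = n * a := by
    have := h2 i0; rw [hS'] at this; exact this
  -- the quadratic for the ratio
  have hn0 : (0:ℝ) < n := by exact_mod_cast hn1
  have hkey : (n:ℝ) * a ^ 2 = ((n:ℝ) - 1) * (a * b) + n * b ^ 2 := by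
    linear_combination b * eqa - a * eqb
  set c : ℝ := ((n:ℝ) - 1) / n with hcdef
  have hr2 : (a / b) ^ 2 = c * (a / b) + 1 := by
    rw [hcdef]
    field_simp
    linear_combination hkey
  have hc0 : 0 < c := by
    rw [hcdef]
    apply div_pos _ hn0
    have : (2:ℝ) ≤ n := by exact_mod_cast hn
    linarith
  have hc1 : c ≤ 1 := by
    rw [hcdef, div_le_one hn0]; linarith
  have hr0 : 0 < a / b := div_pos ha hb
  have hr1 : 1 < a / b := by
    have hfac : (a / b - 1) * (a / b + 1) = c * (a / b) := by linear_combination hr2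
    have hpos : 0 < (a / b - 1) * (a / b + 1) := hfac ▸ mul_pos hc0 hr0
    rcases mul_pos_iff.mp hpos with ⟨h, -⟩ | ⟨-, h⟩
    · linarith
    · linarith
  have hsq : Real.sqrt (c ^ 2 + 4) = 2 * (a / b) - c := by
    rw [show c ^ 2 + 4 = (2 * (a / b) - c) ^ 2 by linear_combination (-4 : ℝ) * hr2]
    exact Real.sqrt_sq (by linarith)
  have hba : b < a := (one_lt_div hb).mp hr1
  have hsup : (⨆ v, x v) = a := by
    apply le_antisymm
    · apply ciSup_le
      rintro (i | w)
      · rw [hxa]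
      · rw [hxb]; exact le_of_lt hba
    · exact le_ciSup (Finite.bddAbove_range x) (Sum.inl i0)
  have hinf : (⨅ v, x v) = b := by
    apply le_antisymm
    · exact ciInf_le (Finite.bddBelow_range x) (Sum.inr i0)
    · apply le_ciInf
      rintro (i | w)
      · rw [hxa]; exact le_of_lt hba
      · rw [hxb]
  rw [hsup, hinf, hsq]
  ring

/-- If `xₙ` is an entrywise-positive adjacency eigenvector of the complete split
graph `S(n, n)`, then the principal ratio `γ(S(n,n)) = (max xₙ)/(min xₙ)` tends
to the golden ratio `φ = (1 + √5)/2` as `n → ∞`. -/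
theorem stmt9
    (x : (n : ℕ) → (Fin n ⊕ Fin n) → ℝ) (lam : ℕ → ℝ)
    (hx : ∀ n, 2 ≤ n → ∀ v, 0 < x n v)
    (heig : ∀ n, 2 ≤ n →
      (completeSplitGraph n n).adjMatrix ℝ *ᵥ x n = lam n • x n) :
    Tendsto (fun n => (⨆ v, x n v) / (⨅ v, x n v)) atTop
      (𝓝 ((1 + Real.sqrt 5) / 2)) := by
  set g : ℝ → ℝ := fun t => (t + Real.sqrt (t ^ 2 + 4)) / 2 with hgdef
  have hg : Continuous g := by
    apply Continuous.div_const
    exact continuous_id.add (Real.continuous_sqrt.comp (by continuity))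
  have hf : Tendsto (fun n : ℕ => ((n : ℝ) - 1) / n) atTop (𝓝 1) := by
    have h0 : Tendsto (fun n : ℕ => 1 - 1 / (n : ℝ)) atTop (𝓝 (1 - 0)) :=
      tendsto_const_nhds.sub tendsto_one_div_atTop_nhds_zero_nat
    rw [sub_zero] at h0
    apply h0.congr'
    filter_upwards [eventually_ge_atTop 1] with n hn
    have : (0:ℝ) < n := by exact_mod_cast hn
    field_simp
  have hgoal : Tendsto (fun n : ℕ => g (((n : ℝ) - 1) / n)) atTop (𝓝 (g 1)) :=
    (hg.tendsto 1).comp hf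
  have hg1 : g 1 = (1 + Real.sqrt 5) / 2 := by
    rw [hgdef]; norm_num
  rw [hg1] at hgoal
  apply hgoal.congr'
  filter_upwards [eventually_ge_atTop 2] with n hn
  exact (csg_ratio n hn (x n) (lam n) (hx n hn) (heig n hn)).symm
end

section
/- Fix an integer k ≥ 1. For each n ≥ 2 let x_n be an entrywise-positive eigenvector of the adjacency matrix of the complete split graph S(n, kn). Then c(x_n) tends to k·((√(4k+1) − 1)/k − 2)² / (√(4k+1) + 1)² as n → ∞. -/
open scoped Classical
open Matrix Filter Topology

lemma csg_mulVec_inr (n m : ℕ) (y : Fin n ⊕ Fin m → ℝ) (j : Fin m) :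
    ((completeSplitGraph n m).adjMatrix ℝ *ᵥ y) (Sum.inr j) = ∑ i : Fin n, y (Sum.inl i) := by
  simp only [mulVec, dotProduct, SimpleGraph.adjMatrix_apply]
  simp [mulVec, dotProduct, SimpleGraph.adjMatrix_apply, completeSplitGraph,
    Fintype.sum_sum_type]

lemma csg_mulVec_inl (n m : ℕ) (y : Fin n ⊕ Fin m → ℝ) (i : Fin n) :
    ((completeSplitGraph n m).adjMatrix ℝ *ᵥ y) (Sum.inl i) = (∑ w, y w) - y (Sum.inl i) := by
  simp only [mulVec, dotProduct, SimpleGraph.adjMatrix_apply]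
  simp [mulVec, dotProduct, SimpleGraph.adjMatrix_apply, completeSplitGraph,
    Fintype.sum_sum_type]
  have h1 : ∑ x : Fin n, (if i = x then 0 else y (Sum.inl x))
      = ∑ x : Fin n, (y (Sum.inl x) - if i = x then y (Sum.inl x) else 0) := by
    apply Finset.sum_congr rfl; intro x _; by_cases h : i = x <;> simp [h]
  rw [h1, Finset.sum_sub_distrib, Finset.sum_ite_eq Finset.univ i (fun x => y (Sum.inl x))]
  simp; ring

noncomputable def auxF (K t : ℝ) : ℝ := (Real.sqrt ((1-t)^2 + 4*K) - (1-t)) / (2*K)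
noncomputable def auxG (K r : ℝ) : ℝ := K * (1-r)^2 / (1+K*r)^2

lemma continuous_auxF (K : ℝ) : Continuous (auxF K) := by
  unfold auxF; fun_prop

lemma cv2_two_block (n m : ℕ) (y : Fin n ⊕ Fin m → ℝ) (a b : ℝ)
    (ha : ∀ i, y (Sum.inl i) = a) (hb : ∀ j, y (Sum.inr j) = b)
    (hpos : 0 < (n:ℝ)*a + (m:ℝ)*b) :
    cv2 y = ((n:ℝ)*(m:ℝ)*(a-b)^2) / ((n:ℝ)*a + (m:ℝ)*b)^2 := by
  have hnm : n + m ≠ 0 := by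
    rintro h
    obtain ⟨rfl, rfl⟩ : n = 0 ∧ m = 0 := by omega
    simp at hpos
  have hnm' : ((n:ℝ) + m) ≠ 0 := by
    have h0 : (0:ℕ) < n + m := Nat.pos_of_ne_zero hnm
    have h3 : (0:ℝ) < (n:ℝ) + m := by exact_mod_cast h0
    linarith
  have hcard : (Fintype.card (Fin n ⊕ Fin m) : ℝ) = (n:ℝ) + m := by simp
  have hsum : ∑ w, y w = (n:ℝ)*a + (m:ℝ)*b := by
    rw [Fintype.sum_sum_type]
    simp [ha, hb, mul_comm]
  have h2 : (n:ℝ)*a+(m:ℝ)*b ≠ 0 := ne_of_gt hpos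
  unfold cv2
  rw [hcard, hsum, Fintype.sum_sum_type]
  simp only [ha, hb, Finset.sum_const, Finset.card_univ, Fintype.card_fin, nsmul_eq_mul]
  field_simp
  ring

/-- Fix `k ≥ 1`.  If `xₙ` is an entrywise-positive adjacency eigenvector of the
complete split graph `S(n, kn)`, then
`c(xₙ) → k·((√(4k+1) − 1)/k − 2)² / (√(4k+1) + 1)²` as `n → ∞`. -/
theorem stmt10 (k : ℕ) (hk : 1 ≤ k)
    (x : (n : ℕ) → (Fin n ⊕ Fin (k * n)) → ℝ) (lam : ℕ → ℝ)
    (hx : ∀ n, 2 ≤ n → ∀ v, 0 < x n v)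
    (heig : ∀ n, 2 ≤ n →
      (completeSplitGraph n (k * n)).adjMatrix ℝ *ᵥ x n = lam n • x n) :
    Tendsto (fun n => cv2 (x n)) atTop
      (𝓝 ((k : ℝ) * ((Real.sqrt (4 * k + 1) - 1) / k - 2) ^ 2 /
        (Real.sqrt (4 * k + 1) + 1) ^ 2)) := by
  set K : ℝ := (k : ℝ) with hKdef
  have hK1 : (1:ℝ) ≤ K := by rw [hKdef]; exact_mod_cast hk
  have hK0 : (0:ℝ) < K := lt_of_lt_of_le one_pos hK1
  -- key pointwise formula
  have key : ∀ n : ℕ, 2 ≤ n → cv2 (x n) = auxG K (auxF K (1/(n:ℝ))) := by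
    intro n hn
    have hn0 : 0 < n := by omega
    have hNpos : (0:ℝ) < (n:ℝ) := by exact_mod_cast hn0
    have hkn0 : 0 < k * n := by positivity
    set i0 : Fin n := ⟨0, hn0⟩
    set j0 : Fin (k*n) := ⟨0, hkn0⟩
    set a : ℝ := x n (Sum.inl i0) with hadef
    set b : ℝ := x n (Sum.inr j0) with hbdef
    have ha0 : 0 < a := hx n hn _
    have hb0 : 0 < b := hx n hn _
    have heq := heig n hn
    have h1 : ∀ j, lam n * x n (Sum.inr j) = ∑ i : Fin n, x n (Sum.inl i) := by
      intro j
      have := congrFun heq (Sum.inr j)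
      rw [csg_mulVec_inr] at this
      simpa [Pi.smul_apply] using this.symm
    have h2 : ∀ i, lam n * x n (Sum.inl i) = (∑ w, x n w) - x n (Sum.inl i) := by
      intro i
      have := congrFun heq (Sum.inl i)
      rw [csg_mulVec_inl] at this
      simpa [Pi.smul_apply] using this.symm
    have hSCpos : 0 < ∑ i : Fin n, x n (Sum.inl i) :=
      Finset.sum_pos (fun i _ => hx n hn _) ⟨i0, Finset.mem_univ _⟩
    have hlam : 0 < lam n := by nlinarith [h1 j0, hSCpos, hb0]
    have hB : ∀ j, x n (Sum.inr j) = b := by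
      intro j
      exact mul_left_cancel₀ (ne_of_gt hlam) ((h1 j).trans (h1 j0).symm)
    have hA : ∀ i, x n (Sum.inl i) = a := by
      intro i
      have e1 : (lam n + 1) * x n (Sum.inl i) = ∑ w, x n w := by
        linear_combination h2 i
      have e2 : (lam n + 1) * a = ∑ w, x n w := by
        linear_combination h2 i0
      exact mul_left_cancel₀ (by positivity) (e1.trans e2.symm)
    have hSC : ∑ i : Fin n, x n (Sum.inl i) = (n:ℝ) * a := by
      simp [hA, mul_comm]
    have hS : ∑ w, x n w = (n:ℝ) * a + K * (n:ℝ) * b := by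
      rw [Fintype.sum_sum_type]
      simp [hA, hB, mul_comm]
      exact Or.inl (Or.inl hKdef.symm)
    have eq1 : lam n * b = (n:ℝ) * a := by rw [← hSC]; exact h1 j0
    have eq2 : lam n * a = ((n:ℝ) * a + K * (n:ℝ) * b) - a := by
      rw [← hS]; exact h2 i0
    have poly : (n:ℝ)*a^2 + a*b = (n:ℝ)*a*b + K*(n:ℝ)*b^2 := by
      linear_combination b*eq2 - a*eq1
    set r : ℝ := b / a with hrdef
    have hr : 0 < r := by positivity
    set c : ℝ := 1 - 1/(n:ℝ) with hcdef
    have hc : 0 < c := by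
      have : (2:ℝ) ≤ (n:ℝ) := by exact_mod_cast hn
      rw [hcdef]
      have : 1/(n:ℝ) ≤ 1/2 := by
        apply one_div_le_one_div_of_le <;> linarith
      linarith
    have hr2 : K*r^2 + c*r = 1 := by
      rw [hrdef, hcdef]
      field_simp
      linear_combination (-1 : ℝ) * poly
    have hsq : (2*K*r + c)^2 = c^2 + 4*K := by linear_combination 4*K*hr2
    have hrf : auxF K (1/(n:ℝ)) = r := by
      unfold auxF
      rw [show (1:ℝ) - 1/(n:ℝ) = c from rfl, ← hsq, Real.sqrt_sq (by positivity)]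
      field_simp
      ring
    have hcv : cv2 (x n) = auxG K r := by
      rw [cv2_two_block n (k*n) (x n) a b hA hB (by push_cast; positivity)]
      unfold auxG
      rw [hrdef]
      have hden : (0:ℝ) < a + K * b := by positivity
      have h1r : (0:ℝ) < 1 + K * (b/a) := by positivity
      push_cast
      field_simp
      ring
    rw [hcv, hrf]
  -- continuity/limit part
  have hf0 : auxF K 0 = (Real.sqrt (4*K+1) - 1)/(2*K) := by
    unfold auxF
    norm_num
    rw [show (1:ℝ) + 4*K = 4*K+1 by ring]
  have hs1 : (1:ℝ) < Real.sqrt (4*K+1) := by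
    have : (1:ℝ) < 4*K+1 := by linarith
    nlinarith [Real.sq_sqrt (by linarith : (0:ℝ) ≤ 4*K+1), Real.sqrt_nonneg (4*K+1)]
  have hf0pos : 0 < auxF K 0 := by
    rw [hf0]
    exact div_pos (by linarith) (by positivity)
  have hgden : (1 + K * auxF K 0) ≠ 0 := by nlinarith
  have hcontg : ContinuousAt (auxG K) (auxF K 0) := by
    unfold auxG
    exact ContinuousAt.div (by fun_prop) (by fun_prop) (pow_ne_zero 2 hgden)
  have hlim : Tendsto (fun nn : ℕ => auxG K (auxF K (1/(nn:ℝ)))) atTop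
      (𝓝 (auxG K (auxF K 0))) := by
    have hcf : ContinuousAt (fun t => auxG K (auxF K t)) 0 :=
      hcontg.comp (continuous_auxF K).continuousAt
    exact hcf.tendsto.comp tendsto_one_div_atTop_nhds_zero_nat
  have hval : auxG K (auxF K 0) = K * ((Real.sqrt (4 * K + 1) - 1) / K - 2) ^ 2 /
      (Real.sqrt (4 * K + 1) + 1) ^ 2 := by
    rw [hf0]
    unfold auxG
    set s := Real.sqrt (4*K+1) with hsdef
    have hs0 : 0 < s := lt_trans one_pos hs1
    have hsp : s + 1 ≠ 0 := by positivity
    have e2 : 1 + K * ((s-1)/(2*K)) = (s+1)/2 := by field_simp; ring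
    rw [e2]
    field_simp
    ring
  rw [← hval] at *
  refine Tendsto.congr' ?_ hlim
  filter_upwards [eventually_ge_atTop 2] with n hn
  exact (key n hn).symm
end

section
/- Fix an integer r ≥ 4. For each n for which there exists a connected r-regular graph G_n^r on n vertices, let P_nG_n^r be the graph obtained by identifying one endpoint of a path on n vertices with a vertex of G_n^r, and let x_n be an entrywise-positive eigenvector of its adjacency matrix. Then the principal ratio γ(P_nG_n^r) = (max_v x_n(v))/(min_v x_n(v)) tends to ∞ as n → ∞. -/
open scoped Classical
open Matrix Filter Topology

/-- The kite built from a head graph `G` by attaching a path with `p` extra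
vertices `inl 0, inl 1, …, inl (p−1)` to the vertex `v0` of `G`; the path on
`p + 1` vertices `inl 0 — inl 1 — ⋯ — inl (p−1) — v0` has its last vertex
identified with `v0`. -/
def kite (p : ℕ) {V : Type*} (G : SimpleGraph V) (v0 : V) :
    SimpleGraph (Fin p ⊕ V) where
  Adj u v :=
    match u, v with
    | Sum.inl i, Sum.inl j => i.val + 1 = j.val ∨ j.val + 1 = i.val
    | Sum.inl i, Sum.inr w => i.val + 1 = p ∧ w = v0
    | Sum.inr w, Sum.inl j => j.val + 1 = p ∧ w = v0
    | Sum.inr w, Sum.inr w' => G.Adj w w'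
  symm := by
    constructor
    rintro (i | w) (j | w') h
    · exact h.symm
    · exact h
    · exact h
    · exact G.adj_symm h
  loopless := by
    constructor
    rintro (i | w) h
    · rcases h with h | h <;> omega
    · exact G.irrefl h

lemma kite_adj_inr_inr (p : ℕ) {V : Type*} (G : SimpleGraph V) (v0 : V) (w w' : V) :
    (kite p G v0).Adj (Sum.inr w) (Sum.inr w') ↔ G.Adj w w' := Iff.rfl

/-- Fix `r ≥ 4`.  For every `n` admitting a connected `r`-regular graph `Gₙʳ` on
`n` vertices, the kite `PₙGₙʳ` (a path on `n` vertices glued to a vertex of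
`Gₙʳ`) has principal ratio `γ(PₙGₙʳ) = (max xₙ)/(min xₙ)` tending to `∞` as
`n → ∞`, where `xₙ` is any entrywise-positive adjacency eigenvector. -/
theorem stmt14 (r : ℕ) (hr : 4 ≤ r) :
    ∀ C : ℝ, ∃ N : ℕ, ∀ n : ℕ, N ≤ n →
      ∀ (G : SimpleGraph (Fin n)), G.Connected → G.IsRegularOfDegree r →
      ∀ (v0 : Fin n) (x : Fin (n - 1) ⊕ Fin n → ℝ) (lam : ℝ),
        (∀ v, 0 < x v) →
        (kite (n - 1) G v0).adjMatrix ℝ *ᵥ x = lam • x →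
        C < (⨆ v, x v) / (⨅ v, x v) := by
  intro C
  obtain ⟨k, hk⟩ := pow_unbounded_of_one_lt C (one_lt_two (α := ℝ))
  refine ⟨k + 2, fun n hn G hGconn hGreg v0 x lam hxpos hx => ?_⟩
  have hn2 : 2 ≤ n := by omega
  have hp1 : 1 ≤ n - 1 := by omega
  -- the eigen-equation, split over the two components
  have heq : ∀ u : Fin (n - 1) ⊕ Fin n,
      (∑ i : Fin (n - 1),
        (if (kite (n - 1) G v0).Adj u (Sum.inl i) then (1:ℝ) else 0) * x (Sum.inl i)) +
      (∑ w : Fin n,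
        (if (kite (n - 1) G v0).Adj u (Sum.inr w) then (1:ℝ) else 0) * x (Sum.inr w)) =
      lam * x u := by
    intro u
    have h := congrFun hx u
    simpa [Matrix.mulVec, dotProduct, SimpleGraph.adjMatrix_apply,
      Fintype.sum_sum_type] using h
  -- path values
  set a : ℕ → ℝ := fun i => if h : i < n - 1 then x (Sum.inl ⟨i, h⟩) else 0 with hadef
  have ha : ∀ (i : ℕ) (h : i < n - 1), a i = x (Sum.inl ⟨i, h⟩) := fun i h => dif_pos h
  have ha_pos : ∀ i, i < n - 1 → 0 < a i := fun i h => by rw [ha i h]; exact hxpos _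
  -- lam ≥ r
  haveI : Nonempty (Fin n) := ⟨⟨0, by omega⟩⟩
  have hlam4 : (4:ℝ) ≤ lam := by
    obtain ⟨w, hwmin⟩ := Finite.exists_min (fun w : Fin n => x (Sum.inr w))
    have h := heq (Sum.inr w)
    have h1 : 0 ≤ ∑ i : Fin (n - 1),
        (if (kite (n - 1) G v0).Adj (Sum.inr w) (Sum.inl i) then (1:ℝ) else 0) * x (Sum.inl i) := by
      refine Finset.sum_nonneg fun i _ => ?_
      split_ifs <;> simp [le_of_lt (hxpos _)]
    have hdeg : (Finset.univ.filter (G.Adj w)).card = r := by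
      rw [← SimpleGraph.neighborFinset_eq_filter]; exact hGreg w
    have h2 : (r:ℝ) * x (Sum.inr w) ≤ ∑ w' : Fin n,
        (if (kite (n - 1) G v0).Adj (Sum.inr w) (Sum.inr w') then (1:ℝ) else 0) * x (Sum.inr w') := by
      have e1 : (r:ℝ) * x (Sum.inr w)
          = ∑ w' : Fin n, (if G.Adj w w' then (1:ℝ) else 0) * x (Sum.inr w) := by
        rw [← Finset.sum_mul, Finset.sum_boole, hdeg]
      rw [e1]
      refine Finset.sum_le_sum fun w' _ => ?_
      rw [kite_adj_inr_inr]
      split_ifs with hadj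
      · simpa using hwmin w'
      · simp
    have hle : (r:ℝ) * x (Sum.inr w) ≤ lam * x (Sum.inr w) := by linarith
    have hrlam : (r:ℝ) ≤ lam := le_of_mul_le_mul_right
      (by simpa [mul_comm] using hle) (hxpos (Sum.inr w))
    calc (4:ℝ) ≤ (r:ℝ) := by exact_mod_cast hr
    _ ≤ lam := hrlam
  -- equation at the start of the path
  have eq0 : 2 ≤ n - 1 → lam * a 0 = a 1 := by
    intro hp2
    have h0p : 0 < n - 1 := by omega
    have h := heq (Sum.inl ⟨0, h0p⟩)
    have h2 : (∑ w : Fin n,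
        (if (kite (n - 1) G v0).Adj (Sum.inl ⟨0, h0p⟩) (Sum.inr w) then (1:ℝ) else 0)
          * x (Sum.inr w)) = 0 := by
      refine Finset.sum_eq_zero fun w _ => ?_
      rw [if_neg, zero_mul]
      rintro ⟨hc, -⟩
      have hc' : 0 + 1 = n - 1 := hc
      omega
    have h1 : (∑ i : Fin (n - 1),
        (if (kite (n - 1) G v0).Adj (Sum.inl ⟨0, h0p⟩) (Sum.inl i) then (1:ℝ) else 0)
          * x (Sum.inl i)) = a 1 := by
      have key : ∀ i : Fin (n - 1),
          (if (kite (n - 1) G v0).Adj (Sum.inl ⟨0, h0p⟩) (Sum.inl i) then (1:ℝ) else 0)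
            * x (Sum.inl i)
          = (if i = (⟨1, hp2⟩ : Fin (n - 1)) then x (Sum.inl i) else 0) := by
        intro i
        by_cases hB : (i : ℕ) = 1
        · have e1 : i = (⟨1, hp2⟩ : Fin (n - 1)) := Fin.ext hB
          have hAdj : (kite (n - 1) G v0).Adj (Sum.inl ⟨0, h0p⟩) (Sum.inl i) :=
            Or.inl (show (0:ℕ) + 1 = (i:ℕ) by omega)
          rw [if_pos hAdj, if_pos e1, one_mul]
        · have e1 : i ≠ (⟨1, hp2⟩ : Fin (n - 1)) := by
            intro hc
            exact hB (congrArg Fin.val hc)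
          have hnAdj : ¬ (kite (n - 1) G v0).Adj (Sum.inl ⟨0, h0p⟩) (Sum.inl i) := by
            rintro (hc | hc)
            · have hc1 : (0:ℕ) + 1 = (i:ℕ) := hc
              omega
            · have hc1 : (i:ℕ) + 1 = 0 := hc
              omega
          rw [if_neg hnAdj, if_neg e1, zero_mul]
      rw [Finset.sum_congr rfl fun i _ => key i, Finset.sum_ite_eq']
      simp [ha 1 hp2]
    rw [h1, h2, add_zero] at h
    rw [ha 0 h0p]
    exact h.symm
  -- equation at interior path vertices
  have eqj : ∀ j, 1 ≤ j → j + 1 < n - 1 → lam * a j = a (j - 1) + a (j + 1) := by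
    intro j hj1 hjp
    have hjlt : j < n - 1 := by omega
    have hjm : j - 1 < n - 1 := by omega
    have h := heq (Sum.inl ⟨j, hjlt⟩)
    have h2 : (∑ w : Fin n,
        (if (kite (n - 1) G v0).Adj (Sum.inl ⟨j, hjlt⟩) (Sum.inr w) then (1:ℝ) else 0)
          * x (Sum.inr w)) = 0 := by
      refine Finset.sum_eq_zero fun w _ => ?_
      rw [if_neg, zero_mul]
      rintro ⟨hc, -⟩
      have hc' : j + 1 = n - 1 := hc
      omega
    have h1 : (∑ i : Fin (n - 1),
        (if (kite (n - 1) G v0).Adj (Sum.inl ⟨j, hjlt⟩) (Sum.inl i) then (1:ℝ) else 0)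
          * x (Sum.inl i)) = a (j - 1) + a (j + 1) := by
      have key : ∀ i : Fin (n - 1),
          (if (kite (n - 1) G v0).Adj (Sum.inl ⟨j, hjlt⟩) (Sum.inl i) then (1:ℝ) else 0)
            * x (Sum.inl i)
          = (if i = (⟨j + 1, hjp⟩ : Fin (n - 1)) then x (Sum.inl i) else 0)
            + (if i = (⟨j - 1, hjm⟩ : Fin (n - 1)) then x (Sum.inl i) else 0) := by
        intro i
        by_cases hB : (i : ℕ) = j + 1
        · have e1 : i = (⟨j + 1, hjp⟩ : Fin (n - 1)) := Fin.ext hB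
          have e2 : i ≠ (⟨j - 1, hjm⟩ : Fin (n - 1)) := by
            intro hc
            have h3 : (i : ℕ) = j - 1 := congrArg Fin.val hc
            omega
          have hAdj : (kite (n - 1) G v0).Adj (Sum.inl ⟨j, hjlt⟩) (Sum.inl i) :=
            Or.inl (show j + 1 = (i:ℕ) by omega)
          rw [if_pos hAdj, if_pos e1, if_neg e2, one_mul, add_zero]
        · by_cases hC : (i : ℕ) = j - 1
          · have e1 : i = (⟨j - 1, hjm⟩ : Fin (n - 1)) := Fin.ext hC
            have e2 : i ≠ (⟨j + 1, hjp⟩ : Fin (n - 1)) := by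
              intro hc
              exact hB (congrArg Fin.val hc)
            have hAdj : (kite (n - 1) G v0).Adj (Sum.inl ⟨j, hjlt⟩) (Sum.inl i) :=
              Or.inr (show (i:ℕ) + 1 = j by omega)
            rw [if_pos hAdj, if_pos e1, if_neg e2, one_mul, zero_add]
          · have e1 : i ≠ (⟨j + 1, hjp⟩ : Fin (n - 1)) := by
              intro hc
              exact hB (congrArg Fin.val hc)
            have e2 : i ≠ (⟨j - 1, hjm⟩ : Fin (n - 1)) := by
              intro hc
              exact hC (congrArg Fin.val hc)
            have hnAdj : ¬ (kite (n - 1) G v0).Adj (Sum.inl ⟨j, hjlt⟩) (Sum.inl i) := by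
              rintro (hc | hc)
              · have hc1 : j + 1 = (i:ℕ) := hc
                omega
              · have hc1 : (i:ℕ) + 1 = j := hc
                omega
            rw [if_neg hnAdj, if_neg e1, if_neg e2, zero_mul, add_zero]
      rw [Finset.sum_congr rfl fun i _ => key i, Finset.sum_add_distrib,
        Finset.sum_ite_eq', Finset.sum_ite_eq']
      simp [ha (j + 1) hjp, ha (j - 1) hjm, add_comm]
    rw [h1, h2, add_zero] at h
    rw [ha j hjlt]
    exact h.symm
  -- exponential growth along the path
  have grow : ∀ i, i + 1 < n - 1 → 2 * a i ≤ a (i + 1) := by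
    intro i
    induction i with
    | zero =>
      intro h
      have he := eq0 (by omega)
      nlinarith [ha_pos 0 (by omega), mul_le_mul_of_nonneg_right hlam4 (ha_pos 0 (by omega)).le]
    | succ i ih =>
      intro h
      have h1 := ih (by omega)
      have h2 : lam * a (i + 1) = a i + a (i + 2) := by
        simpa using eqj (i + 1) (by omega) (by omega)
      nlinarith [ha_pos i (by omega), ha_pos (i + 1) (by omega),
        mul_le_mul_of_nonneg_right hlam4 (ha_pos (i + 1) (by omega)).le]
  have growpow : ∀ i, i < n - 1 → (2:ℝ) ^ i * a 0 ≤ a i := by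
    intro i
    induction i with
    | zero => intro h; simp
    | succ i ih =>
      intro h
      have h1 := ih (by omega)
      have h2 := grow i (by omega)
      have h0 := ha_pos 0 (by omega)
      calc (2:ℝ) ^ (i + 1) * a 0 = 2 * ((2:ℝ) ^ i * a 0) := by ring
      _ ≤ 2 * a i := by nlinarith
      _ ≤ a (i + 1) := h2
  -- conclude
  haveI : Nonempty (Fin (n - 1) ⊕ Fin n) := ⟨Sum.inr ⟨0, by omega⟩⟩
  have hsup : a (n - 1 - 1) ≤ ⨆ v, x v := by
    rw [ha (n - 1 - 1) (by omega)]
    exact le_ciSup (Finite.bddAbove_range x) _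
  have hinf : (⨅ v, x v) ≤ a 0 := by
    rw [ha 0 (by omega)]
    exact ciInf_le (Finite.bddBelow_range x) _
  have hinfpos : 0 < ⨅ v, x v := by
    obtain ⟨v, hv⟩ := Finite.exists_min x
    exact lt_of_lt_of_le (hxpos v) (le_ciInf hv)
  have hmain : (2:ℝ) ^ (n - 1 - 1) * (⨅ v, x v) ≤ ⨆ v, x v := by
    calc (2:ℝ) ^ (n - 1 - 1) * (⨅ v, x v) ≤ (2:ℝ) ^ (n - 1 - 1) * a 0 :=
      mul_le_mul_of_nonneg_left hinf (by positivity)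
    _ ≤ a (n - 1 - 1) := growpow (n - 1 - 1) (by omega)
    _ ≤ ⨆ v, x v := hsup
  have hdiv : (2:ℝ) ^ (n - 1 - 1) ≤ (⨆ v, x v) / (⨅ v, x v) := (le_div_iff₀ hinfpos).mpr hmain
  have hpow : (2:ℝ) ^ k ≤ (2:ℝ) ^ (n - 1 - 1) := pow_le_pow_right₀ one_le_two (by omega)
  linarith
end

section
/- Let G be a connected simple graph that is not regular, and for each k ≥ 1 let x_k be an entrywise-positive eigenvector of the adjacency matrix of the k-fold Cartesian power G^{□k}. Then, as k → ∞, γ(G^{□k})² − 1 tends to ∞, c(x_k) tends to ∞, and c(d_k) tends to 0, where γ(G^{□k}) = (max x_k)/(min x_k) and d_k is the degree vector of G^{□k}. -/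
open scoped Classical
open Matrix Filter Topology

/-- The `k`-fold Cartesian (box) power `G^{□k}` of a graph `G`: vertices are
`k`-tuples of vertices of `G`, and two tuples are adjacent iff they differ in
exactly one coordinate, where they are adjacent in `G`. -/
def boxPow {V : Type*} (G : SimpleGraph V) (k : ℕ) : SimpleGraph (Fin k → V) where
  Adj u v := ∃ i, G.Adj (u i) (v i) ∧ ∀ j, j ≠ i → u j = v j
  symm := by
    constructor
    rintro u v ⟨i, hadj, hrest⟩
    exact ⟨i, hadj.symm, fun j hj => (hrest j hj).symm⟩
  loopless := by
    constructor
    rintro u ⟨i, hadj, -⟩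
    exact G.loopless.irrefl _ hadj

set_option linter.unusedSectionVars false

private lemma var_expand {ι : Type*} [Fintype ι] [Nonempty ι] (x : ι → ℝ) :
    ∑ i, (x i - (∑ j, x j) / (Fintype.card ι : ℝ)) ^ 2
      = ∑ i, x i ^ 2 - (∑ j, x j) ^ 2 / (Fintype.card ι : ℝ) := by
  have hN : ((Fintype.card ι : ℝ)) ≠ 0 := by
    exact_mod_cast Fintype.card_ne_zero
  have key : ∀ i, (x i - (∑ j, x j)/(Fintype.card ι : ℝ))^2
      = x i^2 - (2*(∑ j, x j)/(Fintype.card ι : ℝ)) * x i + ((∑ j, x j)/(Fintype.card ι : ℝ))^2 := by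
    intro i; ring
  rw [Finset.sum_congr rfl fun i _ => key i, Finset.sum_add_distrib, Finset.sum_sub_distrib,
    ← Finset.mul_sum, Finset.sum_const, Finset.card_univ, nsmul_eq_mul]
  field_simp
  ring

private lemma cv2_eq {ι : Type*} [Fintype ι] [Nonempty ι] (x : ι → ℝ) (h : ∑ j, x j ≠ 0) :
    cv2 x = (Fintype.card ι : ℝ) * (∑ i, x i ^ 2) / (∑ j, x j) ^ 2 - 1 := by
  have hN : (0:ℝ) < (Fintype.card ι : ℝ) := by
    exact_mod_cast Fintype.card_pos
  rw [cv2, var_expand]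
  field_simp

private lemma sum_prod_pi {V : Type*} [Fintype V] (k : ℕ) (f : Fin k → V → ℝ) :
    ∑ v : Fin k → V, ∏ i, f i (v i) = ∏ i, ∑ a, f i a := by
  induction k with
  | zero => simp
  | succ k ih =>
    rw [← Equiv.sum_comp (Fin.consEquiv (fun _ => V)) (fun v => ∏ i, f i (v i))]
    rw [Fintype.sum_prod_type]
    have key : ∀ (a : V) (g : Fin k → V),
        ∏ i : Fin (k+1), f i ((Fin.cons a g : Fin (k+1) → V) i) = f 0 a * ∏ i : Fin k, f i.succ (g i) := by
      intro a g
      rw [Fin.prod_univ_succ]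
      rfl
    simp only [Fin.consEquiv_apply]
    simp_rw [key, ← Finset.mul_sum, ← Finset.sum_mul, ih (fun i => f i.succ)]
    rw [Fin.prod_univ_succ]

private lemma sum_single {V : Type*} [Fintype V] {k : ℕ} (i : Fin k) (f : V → ℝ) :
    ∑ v : Fin k → V, f (v i) = (Fintype.card V : ℝ) ^ (k - 1) * ∑ a, f a := by
  have h := sum_prod_pi k (fun l => if l = i then f else fun _ => (1:ℝ))
  have h1 : ∀ v : Fin k → V, ∏ l, (if l = i then f else fun _ => (1:ℝ)) (v l) = f (v i) := by
    intro v
    rw [← Finset.mul_prod_erase Finset.univ _ (Finset.mem_univ i)]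
    rw [Finset.prod_congr rfl (fun l hl => by rw [if_neg (Finset.mem_erase.1 hl).1]),
      Finset.prod_const_one, mul_one]
    simp
  have h2 : ∏ l, ∑ a, (if l = i then f else fun _ => (1:ℝ)) a
      = (∑ a, f a) * (Fintype.card V : ℝ) ^ (k-1) := by
    rw [← Finset.mul_prod_erase Finset.univ _ (Finset.mem_univ i)]
    simp only [if_pos rfl]
    congr 1
    rw [Finset.prod_congr rfl (fun l hl => by rw [if_neg (Finset.mem_erase.1 hl).1])]
    simp [Finset.prod_const, Finset.card_erase_of_mem, Finset.card_univ]
  simp only [h1] at h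
  rw [h, h2, mul_comm]

private lemma sum_pair_zero {V : Type*} [Fintype V] {k : ℕ} {i j : Fin k} (hij : i ≠ j)
    (f g : V → ℝ) (hg : ∑ a, g a = 0) :
    ∑ v : Fin k → V, f (v i) * g (v j) = 0 := by
  have h := sum_prod_pi k (fun l => if l = i then f else if l = j then g else fun _ => (1:ℝ))
  have h1 : ∀ v : Fin k → V,
      ∏ l, (if l = i then f else if l = j then g else fun _ => (1:ℝ)) (v l)
        = f (v i) * g (v j) := by
    intro v
    rw [← Finset.mul_prod_erase Finset.univ _ (Finset.mem_univ i)]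
    have hj' : j ∈ Finset.univ.erase i := Finset.mem_erase.2 ⟨hij.symm, Finset.mem_univ j⟩
    rw [← Finset.mul_prod_erase _ _ hj']
    rw [Finset.prod_congr rfl (fun l hl => ?_), Finset.prod_const_one, mul_one]
    · simp [hij.symm]
    · have hl' := Finset.mem_erase.1 hl
      have hl'' := Finset.mem_erase.1 hl'.2
      rw [if_neg hl''.1, if_neg hl'.1]
  have h2 : ∏ l, ∑ a, (if l = i then f else if l = j then g else fun _ => (1:ℝ)) a = 0 := by
    apply Finset.prod_eq_zero (Finset.mem_univ j)
    rw [if_neg hij.symm, if_pos rfl, hg]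
  simp only [h1] at h
  rw [h, h2]

section Graph
variable {V : Type*} [Fintype V] {G : SimpleGraph V}

private lemma sum_nbr (k : ℕ) (v : Fin k → V) (f : (Fin k → V) → ℝ) :
    ∑ u ∈ (boxPow G k).neighborFinset v, f u
      = ∑ i : Fin k, ∑ w ∈ G.neighborFinset (v i), f (Function.update v i w) := by
  rw [← Finset.sum_sigma (Finset.univ) (fun i => G.neighborFinset (v i))
        (fun p => f (Function.update v p.1 p.2))]
  symm
  apply Finset.sum_bij (fun (p : Σ _ : Fin k, V) (_ : p ∈ _) => Function.update v p.1 p.2)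
  · rintro ⟨i, w⟩ hp
    simp only [Finset.mem_sigma, Finset.mem_univ, true_and,
      SimpleGraph.mem_neighborFinset] at hp ⊢
    exact ⟨i, by rwa [Function.update_self], fun j hj => (Function.update_of_ne hj _ _).symm⟩
  · rintro ⟨i, w⟩ hp ⟨i', w'⟩ hp' heq
    simp only [Finset.mem_sigma, Finset.mem_univ, true_and,
      SimpleGraph.mem_neighborFinset] at hp hp'
    obtain rfl : i = i' := by
      by_contra hii
      have h1 := congrFun heq i
      rw [Function.update_self, Function.update_of_ne hii] at h1
      exact hp.ne' h1
    have h2 := congrFun heq i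
    rw [Function.update_self, Function.update_self] at h2
    subst h2
    rfl
  · intro u hu
    rw [SimpleGraph.mem_neighborFinset] at hu
    obtain ⟨i, hadj, hrest⟩ := hu
    refine ⟨⟨i, u i⟩, ?_, ?_⟩
    · simp only [Finset.mem_sigma, Finset.mem_univ, true_and,
        SimpleGraph.mem_neighborFinset]
      exact hadj
    · funext j
      by_cases hj : j = i
      · subst hj; rw [Function.update_self]
      · rw [Function.update_of_ne hj]
        exact hrest j hj
  · intro p hp
    rfl

private lemma boxPow_degree (k : ℕ) (v : Fin k → V) :
    (((boxPow G k).degree v : ℝ)) = ∑ i, (G.degree (v i) : ℝ) := by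
  have h := sum_nbr (G := G) k v (fun _ => (1:ℝ))
  simp only [Finset.sum_const, nsmul_eq_mul, mul_one] at h
  exact h

private lemma boxPow_reach_update (k : ℕ) {a b : V} (hab : G.Reachable a b) :
    ∀ (u : Fin k → V) (i : Fin k), u i = a →
      (boxPow G k).Reachable u (Function.update u i b) := by
  obtain ⟨p⟩ := hab
  induction p with
  | nil =>
    intro u i hui
    rw [← hui, Function.update_eq_self]
  | @cons a c b h p ih =>
    intro u i hui
    have step : (boxPow G k).Adj u (Function.update u i c) :=
      ⟨i, by rw [Function.update_self, hui]; exact h,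
        fun j hj => (Function.update_of_ne hj _ _).symm⟩
    refine step.reachable.trans ?_
    have := ih (Function.update u i c) i (Function.update_self i c u)
    rwa [Function.update_idem] at this

private lemma boxPow_preconnected (hG : G.Preconnected) (k : ℕ) :
    (boxPow G k).Preconnected := by
  intro u v
  have key : ∀ s : Finset (Fin k),
      (boxPow G k).Reachable u (fun j => if j ∈ s then v j else u j) := by
    intro s
    induction s using Finset.induction with
    | empty => simpa using SimpleGraph.Reachable.refl u
    | @insert i s hi ih =>
      have heq : (fun j => if j ∈ insert i s then v j else u j)
          = Function.update (fun j => if j ∈ s then v j else u j) i (v i) := by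
        funext j
        by_cases hj : j = i
        · subst hj; simp
        · rw [Function.update_of_ne hj]
          simp [Finset.mem_insert, hj]
      rw [heq]
      refine ih.trans ?_
      apply boxPow_reach_update k (hG (u i) (v i))
      simp [hi]
  have h := key Finset.univ
  simpa using h

private lemma sum_nbr_comm {W : Type*} [Fintype W] (H : SimpleGraph W) (f g : W → ℝ) :
    ∑ v, (∑ u ∈ H.neighborFinset v, f u) * g v
      = ∑ v, f v * (∑ u ∈ H.neighborFinset v, g u) := by
  simp_rw [Finset.sum_mul, Finset.mul_sum, SimpleGraph.neighborFinset_eq_filter,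
    Finset.sum_filter]
  rw [Finset.sum_comm]
  refine Finset.sum_congr rfl fun a _ => Finset.sum_congr rfl fun b _ => ?_
  rw [SimpleGraph.adj_comm]

private lemma eigen_unique {W : Type*} [Fintype W] [Nonempty W] {H : SimpleGraph W}
    (hconn : H.Preconnected) {μ : ℝ} {x z : W → ℝ}
    (hxpos : ∀ v, 0 < x v) (hzpos : ∀ v, 0 < z v)
    (hxe : ∀ v, ∑ u ∈ H.neighborFinset v, x u = μ * x v)
    (hze : ∀ v, ∑ u ∈ H.neighborFinset v, z u = μ * z v) :
    ∃ c : ℝ, 0 < c ∧ ∀ v, x v = c * z v := by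
  obtain ⟨v0, -, hv0⟩ := Finset.exists_min_image Finset.univ (fun v => x v / z v)
    ⟨Classical.arbitrary W, Finset.mem_univ _⟩
  set t := x v0 / z v0 with ht
  have htpos : 0 < t := div_pos (hxpos v0) (hzpos v0)
  refine ⟨t, htpos, ?_⟩
  set w : W → ℝ := fun v => x v - t * z v with hw
  have hwnn : ∀ v, 0 ≤ w v := by
    intro v
    have h1 : t ≤ x v / z v := hv0 v (Finset.mem_univ v)
    have h2 : t * z v ≤ x v := by
      rw [← le_div_iff₀ (hzpos v)]
      exact h1
    simpa [hw] using sub_nonneg.2 h2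
  have hw0 : w v0 = 0 := by
    simp only [hw, ht]
    rw [div_mul_cancel₀ _ (ne_of_gt (hzpos v0))]
    ring
  have hwe : ∀ v, ∑ u ∈ H.neighborFinset v, w u = μ * w v := by
    intro v
    simp only [hw, Finset.sum_sub_distrib, ← Finset.mul_sum, hxe v, hze v]
    ring
  have hzero : ∀ v, w v = 0 := by
    have hstep : ∀ a b : W, H.Walk a b → w a = 0 → w b = 0 := by
      intro a b p
      induction p with
      | nil => exact id
      | @cons a c b h p ih =>
        intro ha
        apply ih
        have hsum : ∑ u ∈ H.neighborFinset a, w u = 0 := by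
          rw [hwe a, ha, mul_zero]
        have := (Finset.sum_eq_zero_iff_of_nonneg (fun u _ => hwnn u)).1 hsum
        exact this c (SimpleGraph.mem_neighborFinset .. |>.2 h)
    intro v
    obtain ⟨p⟩ := hconn v0 v
    exact hstep v0 v p hw0
  intro v
  have := hzero v
  simp only [hw] at this
  linarith

end Graph

/-- Let `G` be a connected non-regular graph, and for each `k ≥ 1` let `x_k` be
an entrywise-positive adjacency eigenvector of `G^{□k}` and `d_k` the degree
vector of `G^{□k}`.  Then, as `k → ∞`, `γ(G^{□k})² − 1 → ∞`, `c(x_k) → ∞`, and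
`c(d_k) → 0`. -/
theorem stmt19 {V : Type*} [Fintype V] (G : SimpleGraph V) (hG : G.Connected)
    (hnotreg : ¬ ∃ r, G.IsRegularOfDegree r)
    (x : (k : ℕ) → (Fin k → V) → ℝ) (lam : ℕ → ℝ)
    (hx : ∀ k, 1 ≤ k → ∀ v, 0 < x k v)
    (heig : ∀ k, 1 ≤ k → (boxPow G k).adjMatrix ℝ *ᵥ x k = lam k • x k) :
    Tendsto (fun k => ((⨆ v, x k v) / (⨅ v, x k v)) ^ 2 - 1) atTop atTop ∧
    Tendsto (fun k => cv2 (x k)) atTop atTop ∧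
    Tendsto (fun k => cv2 (fun v : Fin k → V => ((boxPow G k).degree v : ℝ)))
      atTop (𝓝 0) := by
  haveI : Nonempty V := hG.nonempty
  set n : ℝ := (Fintype.card V : ℝ) with hn
  have hnpos : 0 < n := by rw [hn]; exact_mod_cast Fintype.card_pos
  set y : V → ℝ := fun a => x 1 (fun _ => a) with hy
  have hypos : ∀ a, 0 < y a := by
    intro a; rw [hy]; exact hx 1 le_rfl _
  have hxe : ∀ k, 1 ≤ k → ∀ v,
      ∑ u ∈ (boxPow G k).neighborFinset v, x k u = lam k * x k v := by
    intro k hk v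
    have h := congrFun (heig k hk) v
    simp only [Pi.smul_apply, smul_eq_mul] at h
    rwa [SimpleGraph.adjMatrix_mulVec_apply] at h
  have hye : ∀ a, ∑ w ∈ G.neighborFinset a, y w = lam 1 * y a := by
    intro a
    have h := hxe 1 le_rfl (fun _ => a)
    rw [sum_nbr, Fin.sum_univ_one] at h
    have hupd : ∀ w : V, Function.update (fun _ : Fin 1 => a) 0 w = fun _ => w := by
      intro w; funext j; rw [Subsingleton.elim j 0, Function.update_self]
    simp only [hupd] at h
    exact h
  have hZe : ∀ (k : ℕ) (v : Fin k → V),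
      ∑ u ∈ (boxPow G k).neighborFinset v, (∏ i, y (u i))
        = ((k : ℝ) * lam 1) * ∏ i, y (v i) := by
    intro k v
    rw [sum_nbr]
    have hterm : ∀ i : Fin k,
        ∑ w ∈ G.neighborFinset (v i), ∏ j, y (Function.update v i w j)
          = lam 1 * ∏ j, y (v j) := by
      intro i
      have hprod : ∀ w, ∏ j, y (Function.update v i w j)
          = y w * ∏ j ∈ Finset.univ.erase i, y (v j) := by
        intro w
        rw [← Finset.mul_prod_erase Finset.univ (fun j => y (Function.update v i w j))
          (Finset.mem_univ i), Function.update_self]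
        congr 1
        refine Finset.prod_congr rfl fun j hj => ?_
        rw [Function.update_of_ne (Finset.mem_erase.1 hj).1]
      simp_rw [hprod]
      rw [← Finset.sum_mul, hye (v i), mul_assoc,
        Finset.mul_prod_erase Finset.univ (fun j => y (v j)) (Finset.mem_univ i)]
    rw [Finset.sum_congr rfl fun i _ => hterm i, Finset.sum_const, Finset.card_univ,
      Fintype.card_fin, nsmul_eq_mul, ← mul_assoc]
  have hlam : ∀ k, 1 ≤ k → lam k = (k : ℝ) * lam 1 := by
    intro k hk
    have h := sum_nbr_comm (boxPow G k) (x k) (fun v => ∏ i, y (v i))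
    simp_rw [hxe k hk, hZe k] at h
    have hS : 0 < ∑ v : Fin k → V, x k v * ∏ i, y (v i) :=
      Finset.sum_pos (fun v _ => mul_pos (hx k hk v) (Finset.prod_pos fun i _ => hypos _))
        Finset.univ_nonempty
    have h2 : lam k * ∑ v : Fin k → V, x k v * ∏ i, y (v i)
        = ((k : ℝ) * lam 1) * ∑ v : Fin k → V, x k v * ∏ i, y (v i) := by
      calc lam k * ∑ v : Fin k → V, x k v * ∏ i, y (v i)
          = ∑ v : Fin k → V, (lam k * x k v) * ∏ i, y (v i) := by
            rw [Finset.mul_sum]; exact Finset.sum_congr rfl fun v _ => by ring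
        _ = ∑ v : Fin k → V, x k v * (((k : ℝ) * lam 1) * ∏ i, y (v i)) := h
        _ = ((k : ℝ) * lam 1) * ∑ v : Fin k → V, x k v * ∏ i, y (v i) := by
            rw [Finset.mul_sum]; exact Finset.sum_congr rfl fun v _ => by ring
    exact mul_right_cancel₀ (ne_of_gt hS) h2
  have hdecomp : ∀ k, 1 ≤ k → ∃ c : ℝ, 0 < c ∧ ∀ v, x k v = c * ∏ i, y (v i) := by
    intro k hk
    apply eigen_unique (boxPow_preconnected hG.preconnected k) (hx k hk)
      (fun v => Finset.prod_pos fun i _ => hypos _) (hxe k hk)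
    intro v
    rw [hZe k v, hlam k hk]
  have hync : ∃ a b : V, y a ≠ y b := by
    by_contra hc
    push_neg at hc
    push_neg at hnotreg
    have h2 := hnotreg (G.degree (Classical.arbitrary V))
    simp only [SimpleGraph.IsRegularOfDegree] at h2
    push_neg at h2
    obtain ⟨v2, hv2⟩ := h2
    apply hv2
    have hdeg : ∀ a : V, (G.degree a : ℝ) = lam 1 := by
      intro a
      have h := hye a
      have heq : ∑ w ∈ G.neighborFinset a, y w = (G.degree a : ℝ) * y a := by
        rw [Finset.sum_congr rfl fun w _ => hc w a, Finset.sum_const, nsmul_eq_mul]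
        rfl
      rw [heq] at h
      exact mul_right_cancel₀ (ne_of_gt (hypos a)) h
    have := (hdeg v2).trans (hdeg (Classical.arbitrary V)).symm
    exact_mod_cast this
  obtain ⟨amax, -, hmax⟩ := Finset.exists_max_image Finset.univ y Finset.univ_nonempty
  obtain ⟨amin, -, hmin⟩ := Finset.exists_min_image Finset.univ y Finset.univ_nonempty
  set M := y amax with hM
  set m := y amin with hm
  have hmpos : 0 < m := hypos amin
  have hmM : m < M := by
    rcases eq_or_lt_of_le (hmin amax (Finset.mem_univ _)) with heq | hlt
    · exfalso
      obtain ⟨a, b, hab⟩ := hync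
      have hconst : ∀ a, y a = m := fun a =>
        le_antisymm (heq ▸ hmax a (Finset.mem_univ a)) (hmin a (Finset.mem_univ a))
      exact hab ((hconst a).trans (hconst b).symm)
    · exact hlt
  have hkpow : ∀ k : ℕ, (Finset.univ.prod fun _ : Fin k => M) = M ^ k := by
    intro k; rw [Finset.prod_const, Finset.card_univ, Fintype.card_fin]
  -- Part 1
  have part1 : Tendsto (fun k => ((⨆ v, x k v) / (⨅ v, x k v)) ^ 2 - 1) atTop atTop := by
    have hone : 1 < (M / m) ^ 2 := one_lt_pow₀ ((one_lt_div hmpos).2 hmM) two_ne_zero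
    have hbase : Tendsto (fun k : ℕ => ((M / m) ^ 2) ^ k - 1) atTop atTop := by
      simp only [sub_eq_add_neg]
      exact tendsto_atTop_add_const_right atTop (-1)
        (tendsto_pow_atTop_atTop_of_one_lt hone)
    refine hbase.congr' ?_
    filter_upwards [eventually_ge_atTop 1] with k hk
    obtain ⟨c, hc, hxc⟩ := hdecomp k hk
    have hsup : (⨆ v, x k v) = c * M ^ k := by
      apply le_antisymm
      · apply ciSup_le
        intro v
        rw [hxc v]
        refine mul_le_mul_of_nonneg_left ?_ hc.le
        calc ∏ i, y (v i) ≤ ∏ _i : Fin k, M :=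
              Finset.prod_le_prod (fun i _ => (hypos _).le)
                (fun i _ => hmax (v i) (Finset.mem_univ _))
          _ = M ^ k := by rw [Finset.prod_const, Finset.card_univ, Fintype.card_fin]
      · have hval : x k (fun _ => amax) = c * M ^ k := by
          rw [hxc]
          congr 1
          rw [Finset.prod_const, Finset.card_univ, Fintype.card_fin]
        rw [← hval]
        exact le_ciSup (Set.Finite.bddAbove (Set.finite_range _)) _
    have hinf : (⨅ v, x k v) = c * m ^ k := by
      apply le_antisymm
      · have hval : x k (fun _ => amin) = c * m ^ k := by
          rw [hxc]
          congr 1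
          rw [Finset.prod_const, Finset.card_univ, Fintype.card_fin]
        rw [← hval]
        exact ciInf_le (Set.Finite.bddBelow (Set.finite_range _)) _
      · apply le_ciInf
        intro v
        rw [hxc v]
        refine mul_le_mul_of_nonneg_left ?_ hc.le
        calc (m : ℝ) ^ k = ∏ _i : Fin k, m := by
              rw [Finset.prod_const, Finset.card_univ, Fintype.card_fin]
          _ ≤ ∏ i, y (v i) :=
              Finset.prod_le_prod (fun i _ => hmpos.le)
                (fun i _ => hmin (v i) (Finset.mem_univ _))
    rw [hsup, hinf, mul_div_mul_left _ _ (ne_of_gt hc)]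
    have hm0 : m ≠ 0 := ne_of_gt hmpos
    field_simp
    ring_nf
    rw [inv_pow, mul_inv_cancel_right₀ (pow_ne_zero (k*2) hm0)]
  -- Part 2
  have part2 : Tendsto (fun k => cv2 (x k)) atTop atTop := by
    set Sy := ∑ a, y a with hSy
    set Sy2 := ∑ a, y a ^ 2 with hSy2
    have hSypos : 0 < Sy := Finset.sum_pos (fun a _ => hypos a) Finset.univ_nonempty
    have hR : 1 < n * Sy2 / Sy ^ 2 := by
      have hvar : 0 < ∑ a, (y a - Sy / n) ^ 2 := by
        obtain ⟨a, b, hab⟩ := hync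
        have hex : ∃ a0, y a0 ≠ Sy / n := by
          by_contra hall
          push_neg at hall
          exact hab ((hall a).trans (hall b).symm)
        obtain ⟨a0, ha0⟩ := hex
        exact Finset.sum_pos' (fun i _ => sq_nonneg _)
          ⟨a0, Finset.mem_univ _, pow_two_pos_of_ne_zero (sub_ne_zero.2 ha0)⟩
      have hx2 := var_expand y
      rw [← hn, ← hSy, ← hSy2] at hx2
      rw [hx2] at hvar
      rw [one_lt_div (by positivity)]
      have h3 : Sy ^ 2 / n < Sy2 := by linarith
      have h4 := (div_lt_iff₀ hnpos).1 h3
      calc Sy ^ 2 < Sy2 * n := h4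
        _ = n * Sy2 := mul_comm _ _
    have hbase : Tendsto (fun k : ℕ => (n * Sy2 / Sy ^ 2) ^ k - 1) atTop atTop := by
      simp only [sub_eq_add_neg]
      exact tendsto_atTop_add_const_right atTop (-1)
        (tendsto_pow_atTop_atTop_of_one_lt hR)
    refine hbase.congr' ?_
    filter_upwards [eventually_ge_atTop 1] with k hk
    obtain ⟨c, hc, hxc⟩ := hdecomp k hk
    have hsum : ∑ v : Fin k → V, x k v = c * Sy ^ k := by
      simp_rw [hxc]
      rw [← Finset.mul_sum, sum_prod_pi k (fun _ => y), Finset.prod_const,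
        Finset.card_univ, Fintype.card_fin, ← hSy]
    have hsum2 : ∑ v : Fin k → V, x k v ^ 2 = c ^ 2 * Sy2 ^ k := by
      simp_rw [hxc, mul_pow]
      rw [← Finset.mul_sum]
      congr 1
      have hsq : ∀ v : Fin k → V, (∏ i, y (v i)) ^ 2 = ∏ i, (fun a => y a ^ 2) (v i) := by
        intro v
        rw [← Finset.prod_pow]
      simp_rw [hsq]
      rw [sum_prod_pi k (fun _ => fun a => y a ^ 2), Finset.prod_const,
        Finset.card_univ, Fintype.card_fin, ← hSy2]
    have hcard : (Fintype.card (Fin k → V) : ℝ) = n ^ k := by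
      rw [hn, Fintype.card_fun, Fintype.card_fin]
      push_cast
      rfl
    have hSk : ∑ v : Fin k → V, x k v ≠ 0 := by
      rw [hsum]; positivity
    rw [cv2_eq _ hSk, hsum, hsum2, hcard]
    congr 1
    have hc' : c ≠ 0 := ne_of_gt hc
    have hSy' : Sy ≠ 0 := ne_of_gt hSypos
    field_simp
    ring_nf
    rw [inv_pow, mul_inv_cancel_right₀ (pow_ne_zero (k*2) hSy')]
  -- Part 3
  have hT : 0 < ∑ a, (G.degree a : ℝ) := by
    have h := hnotreg
    push_neg at h
    have h2 := h (G.degree (Classical.arbitrary V))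
    simp only [SimpleGraph.IsRegularOfDegree] at h2
    push_neg at h2
    obtain ⟨v2, hv2⟩ := h2
    refine Finset.sum_pos' (fun a _ => by positivity) ?_
    rcases Nat.eq_zero_or_pos (G.degree v2) with h0 | hpos
    · refine ⟨Classical.arbitrary V, Finset.mem_univ _, ?_⟩
      have : 0 < G.degree (Classical.arbitrary V) :=
        Nat.pos_of_ne_zero (fun hz => hv2 (by rw [h0, hz]))
      exact_mod_cast this
    · exact ⟨v2, Finset.mem_univ _, by exact_mod_cast hpos⟩
  set T := ∑ a, (G.degree a : ℝ) with hTdef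
  set g : V → ℝ := fun a => (G.degree a : ℝ) - T / n with hgdef
  have hgsum : ∑ a, g a = 0 := by
    rw [hgdef]
    rw [Finset.sum_sub_distrib, Finset.sum_const, nsmul_eq_mul, Finset.card_univ, ← hn,
      ← hTdef]
    field_simp
    simp
  set Vg := ∑ a, g a * g a with hVgdef
  have part3 : Tendsto (fun k => cv2 (fun v : Fin k → V => ((boxPow G k).degree v : ℝ)))
      atTop (𝓝 0) := by
    have hbase := tendsto_const_div_atTop_nhds_zero_nat (n * Vg / T ^ 2)
    refine hbase.congr' ?_
    filter_upwards [eventually_ge_atTop 1] with k hk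
    have hkpos : (0 : ℝ) < (k : ℝ) := by exact_mod_cast hk
    have hcard : (Fintype.card (Fin k → V) : ℝ) = n ^ k := by
      rw [hn, Fintype.card_fun, Fintype.card_fin]
      push_cast
      rfl
    have hpowk : n ^ k = n ^ (k - 1) * n := by
      rw [← pow_succ]
      congr 1
      omega
    have hDsum : ∑ v : Fin k → V, ((boxPow G k).degree v : ℝ) = k * (n ^ (k-1) * T) := by
      simp_rw [boxPow_degree]
      rw [Finset.sum_comm, Finset.sum_congr rfl fun i _ =>
        sum_single i (fun a => (G.degree a : ℝ))]
      rw [← hn, ← hTdef, Finset.sum_const, Finset.card_univ, Fintype.card_fin, nsmul_eq_mul]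
    have hmean : (∑ v : Fin k → V, ((boxPow G k).degree v : ℝ))
        / (Fintype.card (Fin k → V) : ℝ) = k * T / n := by
      rw [hDsum, hcard, hpowk]
      have hnk1 : (n : ℝ) ^ (k-1) ≠ 0 := by positivity
      field_simp
    have hcenter : ∀ v : Fin k → V, ((boxPow G k).degree v : ℝ) - k * T / n
        = ∑ i, g (v i) := by
      intro v
      rw [boxPow_degree, hgdef]
      rw [Finset.sum_sub_distrib, Finset.sum_const, Finset.card_univ, Fintype.card_fin,
        nsmul_eq_mul]
      ring
    have hvar3 : ∑ v : Fin k → V, (((boxPow G k).degree v : ℝ) - k * T / n) ^ 2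
        = k * (n ^ (k-1) * Vg) := by
      simp_rw [hcenter]
      have hsq : ∀ v : Fin k → V, (∑ i, g (v i)) ^ 2 = ∑ i, ∑ j, g (v i) * g (v j) := by
        intro v
        rw [sq, Finset.sum_mul_sum]
      simp_rw [hsq]
      rw [Finset.sum_comm, Finset.sum_congr rfl fun i _ => Finset.sum_comm]
      have hij : ∀ i j : Fin k, (∑ v : Fin k → V, g (v i) * g (v j))
          = if i = j then n ^ (k-1) * Vg else 0 := by
        intro i j
        by_cases h : i = j
        · subst h
          rw [if_pos rfl]
          have := sum_single i (fun a => g a * g a)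
          rw [this, ← hn, ← hVgdef]
        · rw [if_neg h]
          exact sum_pair_zero h g g hgsum
      rw [Finset.sum_congr rfl fun i _ => Finset.sum_congr rfl fun j _ => hij i j]
      simp [Finset.sum_ite_eq, Finset.sum_const, Finset.card_univ, Fintype.card_fin,
        nsmul_eq_mul]
    rw [cv2, hmean, hvar3, hcard, hpowk]
    have hnk1 : (n : ℝ) ^ (k-1) ≠ 0 := by positivity
    have hT' : T ≠ 0 := ne_of_gt hT
    field_simp
  exact ⟨part1, part2, part3⟩
end
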